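/- arXiv:2209.14198 — 4 statements merged into one kernel-verified Lean document; each statement's English description precedes it below -/
import Mathlib

section
/- For every n ≥ 3 and every integer ℓ satisfying either 2^(C(n,2)−1) ≤ ℓ ≤ 2^(C(n,2)−1) + 2^(2n−4) or 2^(C(n,2)) − 2^(2n−4) ≤ ℓ ≤ 2^(C(n,2)), where C(n,2) = n(n−1)/2, there exists a graph universal partial cycle (gupcycle) of length ℓ for the labeled graphs on vertex set {1,…,n}. -/
set_option linter.unusedSectionVars false
set_option maxHeartbeats 1000000
set_option linter.unnecessarySeqFocus false
set_option linter.unusedVariables false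
namespace GUP

section Euler




open Finset

variable {α β : Type*} [DecidableEq α] [Fintype α] [DecidableEq β]

variable (hd tl : α → β)

/-- `Trail v L u`: the list of arcs `L` forms a trail from vertex `v` to vertex `u`,
where each arc `a` goes from `tl a` to `hd a`. -/
inductive Trail : β → List α → β → Prop where
  | nil (v : β) : Trail v [] v
  | cons (a : α) (L : List α) (w : β) : Trail (hd a) L w → Trail (tl a) (a :: L) w

variable {hd tl}

omit [DecidableEq α] [Fintype α] [DecidableEq β] in
lemma Trail.append {v u w : β} {L L' : List α} (h : Trail hd tl v L u)
    (h' : Trail hd tl u L' w) : Trail hd tl v (L ++ L') w := by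
  induction L generalizing v with
  | nil => cases h; exact h'
  | cons a L ih => cases h with | cons _ _ _ ht => exact .cons _ _ _ (ih ht)

omit [DecidableEq α] [Fintype α] [DecidableEq β] in
lemma Trail.split {v w : β} {L L' : List α} (h : Trail hd tl v (L ++ L') w) :
    ∃ u, Trail hd tl v L u ∧ Trail hd tl u L' w := by
  induction L generalizing v with
  | nil => exact ⟨v, .nil v, h⟩
  | cons a L ih =>
    cases h with
    | cons _ _ _ h' =>
      obtain ⟨u, h1, h2⟩ := ih h'
      exact ⟨u, .cons a L u h1, h2⟩

/-- out-sum of a weight function at a vertex -/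
def outS (tl : α → β) (r : α → ℕ) (c : β) : ℕ := ∑ a ∈ univ.filter (fun a => tl a = c), r a

def inS (hd : α → β) (r : α → ℕ) (c : β) : ℕ := ∑ a ∈ univ.filter (fun a => hd a = c), r a

lemma sum_filter_count_cons (p : α → Prop) [DecidablePred p] (a : α) (L : List α) :
    ∑ x ∈ univ.filter p, (a :: L).count x
      = (∑ x ∈ univ.filter p, L.count x) + if p a then 1 else 0 := by
  simp only [List.count_cons]
  rw [Finset.sum_add_distrib]
  congr 1
  simp only [beq_iff_eq]
  rw [Finset.sum_ite_eq (univ.filter p) a (fun _ => 1)]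
  simp [Finset.mem_filter]

lemma sum_update_sub (r : α → ℕ) (a : α) (ha : 0 < r a) (S : Finset α) :
    ∑ x ∈ S, r x = (∑ x ∈ S, Function.update r a (r a - 1) x) + if a ∈ S then 1 else 0 := by
  by_cases h : a ∈ S
  · rw [Finset.sum_update_of_mem h, if_pos h,
      Finset.sum_eq_sum_sdiff_singleton_add h r]
    omega
  · rw [if_neg h, add_zero]
    exact Finset.sum_congr rfl (fun x hx => by
      rw [Function.update_of_ne (fun hxa => h (by rwa [hxa] at hx))])


lemma Trail.count_balance {v u : β} {L : List α} (h : Trail hd tl v L u) (c : β) :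
    (∑ a ∈ univ.filter (fun a => tl a = c), L.count a) + (if c = u then 1 else 0)
      = (∑ a ∈ univ.filter (fun a => hd a = c), L.count a) + (if c = v then 1 else 0) := by
  induction h with
  | nil v => simp
  | cons a L w ht ih =>
    rw [sum_filter_count_cons, sum_filter_count_cons]
    have h1 : (tl a = c) ↔ (c = tl a) := eq_comm
    have h2 : (hd a = c) ↔ (c = hd a) := eq_comm
    simp only [h1, h2]
    split_ifs at ih ⊢ <;> omega

lemma open_trail : ∀ (k : ℕ) (r : α → ℕ), (∑ a, r a) = k → ∀ (v u : β),
    (∀ c, outS tl r c + (if c = u then 1 else 0) = inS hd r c + (if c = v then 1 else 0)) →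
    ∃ L, Trail hd tl v L u ∧ ∀ a, L.count a ≤ r a := by
  intro k
  induction k using Nat.strong_induction_on with
  | _ k ih =>
    intro r hk v u hbal
    by_cases hvu : v = u
    · subst hvu; exact ⟨[], Trail.nil v, by simp⟩
    · have hv := hbal v
      rw [if_neg hvu, if_pos rfl] at hv
      have hpos : 0 < outS tl r v := by omega
      obtain ⟨a, haf, har⟩ := Finset.exists_ne_zero_of_sum_ne_zero (by omega : outS tl r v ≠ 0)
      have htla : tl a = v := (Finset.mem_filter.mp haf).2
      have har' : 0 < r a := Nat.pos_of_ne_zero har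
      set r' := Function.update r a (r a - 1) with hr'
      have hsum : ∀ S : Finset α, ∑ x ∈ S, r x = (∑ x ∈ S, r' x) + if a ∈ S then 1 else 0 :=
        sum_update_sub r a har'
      have hk' : (∑ x, r' x) = k - 1 := by
        have := hsum univ; simp at this; omega
      have hklt : k - 1 < k := by
        have := hsum univ; simp at this; omega
      have hbal' : ∀ c, outS tl r' c + (if c = u then 1 else 0)
          = inS hd r' c + (if c = hd a then 1 else 0) := by
        intro c
        have hc := hbal c
        have h1 : outS tl r c = outS tl r' c + if tl a = c then 1 else 0 := by
          rw [outS, outS, hsum]; simp [Finset.mem_filter]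
        have h2 : inS hd r c = inS hd r' c + if hd a = c then 1 else 0 := by
          rw [inS, inS, hsum]; simp [Finset.mem_filter]
        rw [h1, h2] at hc
        have e1 : (tl a = c) ↔ (c = v) := by rw [htla]; exact eq_comm
        have e2 : (hd a = c) ↔ (c = hd a) := eq_comm
        simp only [e1, e2] at hc
        split_ifs at hc ⊢ <;> omega
      obtain ⟨L, hL, hLc⟩ := ih (k-1) hklt r' hk' (hd a) u hbal'
      refine ⟨a :: L, htla ▸ Trail.cons a L u hL, ?_⟩
      intro x
      simp only [List.count_cons, beq_iff_eq]
      by_cases hx : x = a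
      · subst hx
        have := hLc x
        rw [hr', Function.update_self] at this
        rw [if_pos rfl]; omega
      · have := hLc x
        rw [hr', Function.update_of_ne hx] at this
        rw [if_neg (fun h => hx h.symm)]; omega

/-- closed trail through a given arc, within capacities `r`, for balanced `r`;
the closed trail may be based either at `tl d` or at `hd d`, as requested by `atTl`. -/
lemma closed_of_arc (r : α → ℕ) (d : α) (hd0 : 0 < r d)
    (hbal : ∀ c, outS tl r c = inS hd r c) (atTl : Bool) :
    ∃ L, Trail hd tl (if atTl then tl d else hd d) L (if atTl then tl d else hd d) ∧
      L ≠ [] ∧ (∀ x : α, L.count x ≤ r x) ∧ 0 < L.count d := by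
  set r' := Function.update r d (r d - 1) with hr'
  have hsum : ∀ S : Finset α, ∑ x ∈ S, r x = (∑ x ∈ S, r' x) + if d ∈ S then 1 else 0 :=
    sum_update_sub r d hd0
  have hbal' : ∀ c, outS tl r' c + (if c = tl d then 1 else 0)
      = inS hd r' c + (if c = hd d then 1 else 0) := by
    intro c
    have hc := hbal c
    have h1 : outS tl r c = outS tl r' c + if tl d = c then 1 else 0 := by
      rw [outS, outS, hsum]; simp [Finset.mem_filter]
    have h2 : inS hd r c = inS hd r' c + if hd d = c then 1 else 0 := by
      rw [inS, inS, hsum]; simp [Finset.mem_filter]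
    rw [h1, h2] at hc
    have e1 : (tl d = c) ↔ (c = tl d) := eq_comm
    have e2 : (hd d = c) ↔ (c = hd d) := eq_comm
    simp only [e1, e2] at hc
    split_ifs at hc ⊢ <;> omega
  obtain ⟨L, hL, hLc⟩ := open_trail (∑ x, r' x) r' rfl (hd d) (tl d) hbal'
  have hcount : ∀ x : α, ((d :: L).count x ≤ r x) := by
    intro x
    simp only [List.count_cons, beq_iff_eq]
    by_cases hx : x = d
    · subst hx
      have := hLc x; rw [hr', Function.update_self] at this; rw [if_pos rfl]; omega
    · have := hLc x; rw [hr', Function.update_of_ne hx] at this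
      rw [if_neg (fun h => hx h.symm)]; omega
  cases atTl with
  | true =>
    refine ⟨d :: L, ?_, by simp, hcount, by simp⟩
    simpa using Trail.cons d L (tl d) hL
  | false =>
    refine ⟨L ++ [d], ?_, by simp, ?_, ?_⟩
    · simpa using hL.append (Trail.cons d [] (hd d) (Trail.nil (hd d)))
    · intro x
      have := hcount x
      rw [List.count_append]
      simp only [List.count_cons, beq_iff_eq] at this
      simp only [List.count_singleton', beq_iff_eq]
      omega
    · rw [List.count_append]; simp

omit [Fintype α] [DecidableEq β] in
lemma Trail.rotate {v : β} {L : List α} (h : Trail hd tl v L v) {e : α} (he : e ∈ L) :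
    ∃ L', Trail hd tl (tl e) L' (tl e) ∧ ∀ x, L'.count x = L.count x := by
  obtain ⟨P, Q, rfl⟩ := List.append_of_mem he
  obtain ⟨u, hP, hQ⟩ := h.split
  cases hQ with
  | cons _ _ _ ht =>
    refine ⟨e :: (Q ++ P), Trail.cons e (Q ++ P) (tl e) (ht.append hP), ?_⟩
    intro x
    simp only [List.count_cons, List.count_append]
    omega

lemma sum_sub_pointwise (S : Finset α) (f g : α → ℕ) (hle : ∀ x, g x ≤ f x) :
    ∑ x ∈ S, (f x - g x) = ∑ x ∈ S, f x - ∑ x ∈ S, g x := by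
  have h1 : ∑ x ∈ S, ((f x - g x) + g x) = ∑ x ∈ S, f x :=
    Finset.sum_congr rfl (fun x _ => by have := hle x; omega)
  rw [Finset.sum_add_distrib] at h1
  omega

theorem euler_list (m : α → ℕ) (hbal : ∀ c, outS tl m c = inS hd m c)
    (hconn : ∀ a b, 0 < m a → 0 < m b →
      Relation.ReflTransGen (fun x y => 0 < m y ∧ hd x = tl y) a b)
    (hpos : 0 < ∑ a, m a) :
    ∃ (L : List α) (v : β), Trail hd tl v L v ∧ ∀ a, L.count a = m a := by
  -- descent
  suffices descent : ∀ (k : ℕ) (r : α → ℕ) (L : List α) (v : β), (∑ a, r a) = k →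
      (∀ c, outS tl r c = inS hd r c) → Trail hd tl v L v → L ≠ [] →
      (∀ x, L.count x + r x = m x) →
      ∃ (L' : List α) (v' : β), Trail hd tl v' L' v' ∧ ∀ a, L'.count a = m a by
    obtain ⟨a, _, ha⟩ := Finset.exists_ne_zero_of_sum_ne_zero (Nat.pos_iff_ne_zero.mp hpos)
    have hma : 0 < m a := Nat.pos_of_ne_zero ha
    obtain ⟨C, hC, hCne, hCle, _⟩ := closed_of_arc m a hma hbal true
    set r₀ := fun x => m x - C.count x with hr₀
    have hbal₀ : ∀ c, outS tl r₀ c = inS hd r₀ c := by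
      intro c
      have hb := hC.count_balance c
      have h1 : outS tl r₀ c = outS tl m c - ∑ x ∈ univ.filter (fun x => tl x = c), C.count x :=
        sum_sub_pointwise _ _ _ hCle
      have h2 : inS hd r₀ c = inS hd m c - ∑ x ∈ univ.filter (fun x => hd x = c), C.count x :=
        sum_sub_pointwise _ _ _ hCle
      have h3 : (∑ x ∈ univ.filter (fun x => tl x = c), C.count x)
          ≤ outS tl m c := Finset.sum_le_sum (fun x _ => hCle x)
      have := hbal c
      rw [h1, h2]
      omega
    exact descent (∑ x, r₀ x) r₀ C _ rfl hbal₀ hC hCne (fun x => by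
      have := hCle x; simp only [hr₀]; omega)
  intro k
  induction k using Nat.strong_induction_on with
  | _ k ih =>
    intro r L v hk hbalr hL hLne hcnt
    by_cases h0 : ∑ a, r a = 0
    · refine ⟨L, v, hL, fun a => ?_⟩
      have : r a = 0 := by
        have := Finset.sum_eq_zero_iff.mp h0 a (mem_univ a)
        exact this
      have := hcnt a
      omega
    · obtain ⟨a₀, _, ha₀⟩ := Finset.exists_ne_zero_of_sum_ne_zero h0
      have hra₀ : 0 < r a₀ := Nat.pos_of_ne_zero ha₀
      obtain ⟨b₀, hb₀⟩ := List.exists_mem_of_ne_nil L hLne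
      have hma₀ : 0 < m a₀ := by have := hcnt a₀; omega
      have hmb₀ : 0 < m b₀ := by
        have h1 : 0 < L.count b₀ := List.count_pos_iff.mpr hb₀
        have := hcnt b₀; omega
      have key : ∀ (x : α), Relation.ReflTransGen (fun x y => 0 < m y ∧ hd x = tl y) x b₀ →
          0 < r x → ∃ d, 0 < r d ∧ ∃ e ∈ L, (tl d = tl e ∨ hd d = tl e) := by
        intro x hp
        induction hp using Relation.ReflTransGen.head_induction_on with
        | refl => exact fun hx => ⟨b₀, hx, b₀, hb₀, Or.inl rfl⟩
        | head h' hpath ih' =>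
          rename_i a c
          intro hra
          by_cases hrc : 0 < r c
          · exact ih' hrc
          · have hcL : c ∈ L := by
              apply List.count_pos_iff.mp
              have := hcnt c
              have := h'.1
              omega
            exact ⟨a, hra, c, hcL, Or.inr h'.2⟩
      obtain ⟨d, hrd, e, heL, hcase⟩ := key a₀ (hconn a₀ b₀ hma₀ hmb₀) hra₀
      obtain ⟨L₂, hL₂, hcnt₂⟩ := hL.rotate heL
      have hone : ∃ C, Trail hd tl (tl e) C (tl e) ∧ C ≠ [] ∧ (∀ x, C.count x ≤ r x)
          ∧ 0 < C.count d := by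
        cases hcase with
        | inl hcc =>
          obtain ⟨C, hC, h1, h2, h3⟩ := closed_of_arc r d hrd hbalr true
          rw [if_pos rfl, hcc] at hC
          exact ⟨C, hC, h1, h2, h3⟩
        | inr hcc =>
          obtain ⟨C, hC, h1, h2, h3⟩ := closed_of_arc r d hrd hbalr false
          rw [if_neg (by simp), hcc] at hC
          exact ⟨C, hC, h1, h2, h3⟩
      obtain ⟨C, hC, hCne, hCle, hCd⟩ := hone
      set r'' := fun x => r x - C.count x with hr''
      have hsum'' : ∑ x, r'' x < k := by
        have h1 : ∑ x, (r'' x + C.count x) = ∑ x, r x :=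
          Finset.sum_congr rfl (fun x _ => by have := hCle x; simp only [hr'']; omega)
        rw [Finset.sum_add_distrib] at h1
        have h2 : 0 < ∑ x, C.count x :=
          lt_of_lt_of_le hCd (Finset.single_le_sum (f := fun x => C.count x)
            (fun x _ => Nat.zero_le _) (mem_univ d))
        omega
      have hbal'' : ∀ c, outS tl r'' c = inS hd r'' c := by
        intro c
        have hb := hC.count_balance c
        have h1 : outS tl r'' c = outS tl r c - ∑ x ∈ univ.filter (fun x => tl x = c), C.count x :=
          sum_sub_pointwise _ _ _ hCle
        have h2 : inS hd r'' c = inS hd r c - ∑ x ∈ univ.filter (fun x => hd x = c), C.count x :=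
          sum_sub_pointwise _ _ _ hCle
        have h3 : (∑ x ∈ univ.filter (fun x => tl x = c), C.count x)
            ≤ outS tl r c := Finset.sum_le_sum (fun x _ => hCle x)
        have := hbalr c
        rw [h1, h2]
        omega
      refine ih (∑ x, r'' x) hsum'' r'' (C ++ L₂) (tl e) rfl hbal'' (hC.append hL₂)
        (by simp [hCne]) (fun x => ?_)
      rw [List.count_append]
      have := hCle x
      have := hcnt x
      have := hcnt₂ x
      simp only [hr'']
      omega


lemma length_eq_sum_count (L : List α) : L.length = ∑ a, L.count a := by
  induction L with
  | nil => simp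
  | cons a L ih =>
    simp only [List.count_cons, beq_iff_eq, List.length_cons]
    rw [Finset.sum_add_distrib]
    have h2 : (∑ x : α, if a = x then 1 else 0) = 1 := by
      rw [Finset.sum_ite_eq univ a (fun _ => 1)]; simp
    omega

omit [DecidableEq α] [Fintype α] [DecidableEq β] in
lemma Trail.nil_eq {v u : β} (h : Trail hd tl v [] u) : u = v := by cases h; rfl

omit [DecidableEq α] [Fintype α] [DecidableEq β] in
lemma trail_get_zero {v u : β} {L : List α} (h : Trail hd tl v L u) (hl : 0 < L.length) :
    tl (L.get ⟨0, hl⟩) = v := by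
  cases h with
  | nil => simp at hl
  | cons a L w ht => simp

omit [DecidableEq α] [Fintype α] [DecidableEq β] in
lemma trail_get_last {v u : β} {L : List α} (h : Trail hd tl v L u) (hl : 0 < L.length) :
    hd (L.get ⟨L.length - 1, by omega⟩) = u := by
  induction h with
  | nil => simp at hl
  | cons a L w ht ih =>
    cases L with
    | nil =>
      have := ht.nil_eq
      simpa using this.symm
    | cons b L' => exact ih (by simp)

omit [DecidableEq α] [Fintype α] [DecidableEq β] in
lemma trail_get_chain {v u : β} {L : List α} (h : Trail hd tl v L u) :
    ∀ j (hj : j + 1 < L.length), hd (L.get ⟨j, by omega⟩) = tl (L.get ⟨j+1, hj⟩) := by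
  induction h with
  | nil => intro j hj; simp at hj
  | cons a L w ht ih =>
    intro j hj
    cases j with
    | zero =>
      have h0 : 0 < L.length := by simpa using hj
      have := trail_get_zero ht h0
      simpa using this.symm
    | succ j => exact ih j (by simpa using hj)

lemma count_eq_card_filter_get (L : List α) (a : α) :
    (univ.filter (fun i : Fin L.length => L.get i = a)).card = L.count a := by
  induction L with
  | nil => simp
  | cons b L ih =>
    have h0 : (univ.filter (fun i : Fin (b::L).length => (b::L).get i = a)).card
        = ∑ i : Fin (L.length + 1), (if (b::L).get i = a then 1 else 0) :=
      Finset.card_filter _ _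
    rw [h0, Fin.sum_univ_succ]
    have h1 : ∀ i : Fin L.length, (b :: L).get i.succ = L.get i := fun i => rfl
    simp only [h1]
    have h2 : (∑ i : Fin L.length, if L.get i = a then 1 else 0)
        = (univ.filter (fun i : Fin L.length => L.get i = a)).card :=
      (Finset.card_filter _ _).symm
    rw [h2, ih]
    have h3 : (b :: L).get (0 : Fin (L.length + 1)) = b := rfl
    rw [h3]
    simp only [List.count_cons, beq_iff_eq]
    by_cases hba : b = a
    · simp [hba]; omega
    · have hab : ¬ (a = b) := fun h => hba h.symm
      simp [hba, hab]

theorem euler_fin (m : α → ℕ) (hbal : ∀ c, outS tl m c = inS hd m c)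
    (hconn : ∀ a b, 0 < m a → 0 < m b →
      Relation.ReflTransGen (fun x y => 0 < m y ∧ hd x = tl y) a b)
    (ℓ : ℕ) [NeZero ℓ] (hl : ℓ = ∑ a, m a) :
    ∃ w : Fin ℓ → α, (∀ i : Fin ℓ, hd (w i) = tl (w (i + 1))) ∧
      ∀ a, (univ.filter (fun i => w i = a)).card = m a := by
  have hpos : 0 < ℓ := Nat.pos_of_ne_zero (NeZero.ne ℓ)
  obtain ⟨L, v, hL, hcnt⟩ := euler_list m hbal hconn (by omega)
  have hlen : L.length = ℓ := by
    rw [hl, length_eq_sum_count L]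
    exact Finset.sum_congr rfl (fun a _ => hcnt a)
  refine ⟨fun i => L.get ⟨i.val, by omega⟩, ?_, ?_⟩
  · intro i
    have hiv : (i:ℕ) < ℓ := i.isLt
    have hadd : ((i + 1 : Fin ℓ) : ℕ) = ((i:ℕ) + 1) % ℓ := by
      rw [Fin.val_add, Fin.val_one']
      conv_rhs => rw [Nat.add_mod]
      rw [Nat.mod_eq_of_lt hiv]
    by_cases hlast : (i:ℕ) + 1 < ℓ
    · have h2 : ((i+1 : Fin ℓ):ℕ) = (i:ℕ)+1 := by rw [hadd, Nat.mod_eq_of_lt hlast]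
      have key := trail_get_chain hL i.val (by omega : i.val + 1 < L.length)
      have h4 : L.get ⟨((i+1:Fin ℓ):ℕ), by omega⟩ = L.get ⟨i.val+1, by omega⟩ := by
        congr 1
        exact Fin.ext h2
      show hd (L.get ⟨i.val, by omega⟩) = tl (L.get ⟨((i+1:Fin ℓ):ℕ), by omega⟩)
      rw [h4]
      exact key
    · have hv : (i:ℕ) + 1 = ℓ := by omega
      have h2 : ((i+1:Fin ℓ):ℕ) = 0 := by rw [hadd, hv, Nat.mod_self]
      have e1 := trail_get_last hL (by omega)
      have e2 := trail_get_zero hL (by omega)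
      show hd (L.get ⟨i.val, by omega⟩) = tl (L.get ⟨((i+1:Fin ℓ):ℕ), by omega⟩)
      have g1 : L.get ⟨i.val, by omega⟩ = L.get ⟨L.length - 1, by omega⟩ := by
        congr 1
        apply Fin.ext
        simp only [Fin.val_mk]
        omega
      have g2 : L.get ⟨((i+1:Fin ℓ):ℕ), by omega⟩ = L.get ⟨0, by omega⟩ := by
        congr 1
        apply Fin.ext
        simp only [Fin.val_mk]
        exact h2
      rw [g1, g2, e1, e2]
  · intro a
    rw [← hcnt a, ← count_eq_card_filter_get L a]
    apply Finset.card_bij (fun (i : Fin ℓ) _ => (⟨i.val, by omega⟩ : Fin L.length))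
    · intro i hi
      simp only [Finset.mem_filter, Finset.mem_univ, true_and] at hi ⊢
      exact hi
    · intro i _ j _ hij
      exact Fin.ext (by have := congrArg Fin.val hij; simpa using this)
    · intro j hj
      refine ⟨⟨j.val, by omega⟩, ?_, rfl⟩
      simp only [Finset.mem_filter, Finset.mem_univ, true_and] at hj ⊢
      exact hj


end Euler


def ofBits (f : ℕ → Bool) : ℕ → ℕ
  | 0 => 0
  | k+1 => Nat.bit (f 0) (ofBits (fun i => f (i+1)) k)

lemma ofBits_lt (f : ℕ → Bool) (k : ℕ) : ofBits f k < 2 ^ k := by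
  induction k generalizing f with
  | zero => simp [ofBits]
  | succ k ih =>
    have := ih (fun i => f (i+1))
    simp only [ofBits, Nat.bit, pow_succ]
    cases f 0 <;> simp <;> omega

lemma testBit_ofBits (f : ℕ → Bool) (k a : ℕ) :
    (ofBits f k).testBit a = (decide (a < k) && f a) := by
  induction k generalizing f a with
  | zero => simp [ofBits]
  | succ k ih =>
    cases a with
    | zero => simp [ofBits, Nat.testBit_bit_zero]
    | succ a =>
      simp only [ofBits, Nat.testBit_bit_succ, ih]
      simp [Nat.succ_lt_succ_iff]

lemma eq_of_testBit_lt {x y k : ℕ} (hx : x < 2^k) (hy : y < 2^k)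
    (h : ∀ a < k, x.testBit a = y.testBit a) : x = y := by
  apply Nat.eq_of_testBit_eq
  intro a
  by_cases ha : a < k
  · exact h a ha
  · have hxa : x.testBit a = false := Nat.testBit_lt_two_pow
      (lt_of_lt_of_le hx (Nat.pow_le_pow_right (by norm_num) (by omega)))
    have hya : y.testBit a = false := Nat.testBit_lt_two_pow
      (lt_of_lt_of_le hy (Nat.pow_le_pow_right (by norm_num) (by omega)))
    rw [hxa, hya]

def rep2 (b : Bool × Bool) (k : ℕ) : ℕ :=
  ofBits (fun i => if i % 2 = 0 then b.1 else b.2) k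

lemma rep2_lt (b : Bool × Bool) (k : ℕ) : rep2 b k < 2^k := ofBits_lt _ _

lemma testBit_rep2 (b : Bool × Bool) (k a : ℕ) :
    (rep2 b k).testBit a = (decide (a < k) && (if a % 2 = 0 then b.1 else b.2)) :=
  testBit_ofBits _ _ _

/-- Vertices of the product de Bruijn graph: one binary word of length `n-1-d`
for each `d : Fin (n-2)` (representing the column at distance `d+1`). -/
abbrev Vtx (n : ℕ) := (d : Fin (n-2)) → Fin (2 ^ (n - 1 - d.val))

abbrev Uvx (n : ℕ) := (d : Fin (n-2)) → Fin (2 ^ (n - 2 - d.val))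

variable {n : ℕ}

lemma klen_ge (d : Fin (n-2)) : 2 ≤ n - 1 - d.val := by have := d.isLt; omega

lemma klen_succ (d : Fin (n-2)) : n - 1 - d.val = (n - 2 - d.val) + 1 := by
  have := d.isLt; omega

def hdV (v : Vtx n) : Uvx n := fun d =>
  ⟨(v d).val / 2, by
    have h := (v d).isLt
    have h2 : (v d).val < 2 ^ ((n-2-d.val)+1) := by rw [← klen_succ d]; exact h
    rw [pow_succ] at h2
    exact Nat.div_lt_of_lt_mul (by omega)⟩

def tlV (v : Vtx n) : Uvx n := fun d =>
  ⟨(v d).val % 2 ^ (n-2-d.val), Nat.mod_lt _ (Nat.two_pow_pos _)⟩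

lemma step_testBit {v v' : Vtx n} (h : hdV v = tlV v') (d : Fin (n-2)) (a : ℕ)
    (ha : a + 1 < n - 1 - d.val) : ((v d).val).testBit (a+1) = ((v' d).val).testBit a := by
  have hc := congrArg Fin.val (congrFun h d)
  simp only [hdV, tlV] at hc
  have h1 : ((v d).val / 2).testBit a = ((v d).val).testBit (a+1) := (Nat.testBit_succ _ a).symm
  have h2 : ((v' d).val % 2 ^ (n-2-d.val)).testBit a
      = (decide (a < n-2-d.val) && ((v' d).val).testBit a) := Nat.testBit_mod_two_pow _ _ _
  have ha2 : a < n - 2 - d.val := by have := klen_succ d; omega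
  rw [← h1, hc, h2]
  simp [ha2]

/-- patterns (one 2-periodic pattern per column) -/
abbrev Pat (n : ℕ) := Fin (n-2) → Bool × Bool

def swapP (P : Pat n) : Pat n := fun d => ((P d).2, (P d).1)

lemma swapP_invol (P : Pat n) : swapP (swapP P) = P := rfl

def patV (P : Pat n) : Vtx n := fun d => ⟨rep2 (P d) (n - 1 - d.val), rep2_lt _ _⟩

lemma patV_inj : Function.Injective (patV (n := n)) := by
  intro P Q h
  funext d
  have h0 := congrArg Fin.val (congrFun h d)
  simp only [patV] at h0
  have hb : ∀ a, (rep2 (P d) (n-1-d.val)).testBit a = (rep2 (Q d) (n-1-d.val)).testBit a :=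
    fun a => by rw [h0]
  have h1 := hb 0
  have h2 := hb 1
  rw [testBit_rep2, testBit_rep2] at h1 h2
  have hk := klen_ge d
  have e0 : (0 : ℕ) < n-1-d.val := by omega
  have e1 : (1 : ℕ) < n-1-d.val := by omega
  simp [e0, e1] at h1 h2
  exact Prod.ext h1 h2

lemma hdV_patV (P : Pat n) : hdV (patV P) = tlV (patV (swapP P)) := by
  funext d
  apply Fin.ext
  simp only [hdV, tlV, patV]
  apply Nat.eq_of_testBit_eq
  intro a
  have h1 : ((rep2 (P d) (n-1-d.val)) / 2).testBit a
      = (rep2 (P d) (n-1-d.val)).testBit (a+1) := (Nat.testBit_succ _ a).symm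
  rw [h1, Nat.testBit_mod_two_pow, testBit_rep2, testBit_rep2]
  have hk := klen_ge d
  have hks := klen_succ d
  simp only [swapP]
  by_cases ha : a < n - 2 - d.val
  · have ha' : a + 1 < n - 1 - d.val := by omega
    have hpar : (a+1) % 2 = 0 ↔ ¬ (a % 2 = 0) := by omega
    by_cases hp : a % 2 = 0
    · have hno : ¬ ((a+1) % 2 = 0) := by omega
      simp [ha, ha', hp, hno, show a < n - 1 - d.val by omega]
    · have hyes : (a+1) % 2 = 0 := by omega
      simp [ha, ha', hp, hyes, show a < n - 1 - d.val by omega]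
  · have ha' : ¬ (a + 1 < n - 1 - d.val) := by omega
    simp [ha, ha']

/-- global "pattern-rotation" map; on periodic vertices it implements `swapP`. -/
def sigV (v : Vtx n) : Vtx n := fun d =>
  ⟨ofBits (fun a => if a + 1 < n-1-d.val then ((v d).val).testBit (a+1)
      else ((v d).val).testBit (n-1-d.val-2)) (n-1-d.val), ofBits_lt _ _⟩

lemma sigV_patV (P : Pat n) : sigV (patV P) = patV (swapP P) := by
  funext d
  apply Fin.ext
  simp only [sigV, patV]
  apply Nat.eq_of_testBit_eq
  intro a
  rw [testBit_ofBits, testBit_rep2]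
  have hk := klen_ge d
  set k := n - 1 - d.val with hkdef
  by_cases ha : a < k
  · simp only [ha, decide_true, Bool.true_and]
    by_cases ha1 : a + 1 < k
    · rw [if_pos ha1, testBit_rep2]
      by_cases hp : a % 2 = 0
      · have hno : ¬ ((a+1) % 2 = 0) := by omega
        simp [ha1, ha, hno, hp, swapP]
      · have hyes : (a+1) % 2 = 0 := by omega
        simp [ha1, ha, hyes, hp, swapP]
    · rw [if_neg ha1, testBit_rep2, testBit_rep2]
      have hk2 : k - 2 < k := by omega
      have haeq : a = k - 1 := by omega
      by_cases hp : (k-2) % 2 = 0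
      · have h3 : ¬ ((k-1) % 2 = 0) := by omega
        simp [hk2, hp, swapP, haeq, h3, ha] <;> omega
      · have h3 : (k-1) % 2 = 0 := by omega
        simp [hk2, hp, swapP, haeq, h3, ha] <;> omega
  · simp [ha, testBit_rep2]


lemma testBit_high {x k a : ℕ} (hx : x < 2^k) (ha : k ≤ a) : x.testBit a = false :=
  Nat.testBit_lt_two_pow (lt_of_lt_of_le hx (Nat.pow_le_pow_right (by norm_num) ha))

/-- interpolating path between two vertices -/
def interp (a b : Vtx n) (j : ℕ) : Vtx n := fun d =>
  ⟨ofBits (fun i => if i + j < n-1-d.val then ((a d).val).testBit (i+j)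
      else if n ≤ i + j then ((b d).val).testBit (i + j - n) else false) (n-1-d.val),
   ofBits_lt _ _⟩

lemma interp_zero (a b : Vtx n) : interp a b 0 = a := by
  funext d
  apply Fin.ext
  simp only [interp]
  apply Nat.eq_of_testBit_eq
  intro i
  rw [testBit_ofBits]
  by_cases hi : i < n-1-d.val
  · simp [hi]
  · simp [hi, testBit_high (a d).isLt (show n-1-d.val ≤ i by omega)]

lemma interp_n (hn3 : 3 ≤ n) (a b : Vtx n) : interp a b n = b := by
  funext d
  apply Fin.ext
  simp only [interp]
  apply Nat.eq_of_testBit_eq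
  intro i
  rw [testBit_ofBits]
  have hd := d.isLt
  by_cases hi : i < n-1-d.val
  · have h1 : ¬ (i + n < n-1-d.val) := by omega
    have h2 : n ≤ i + n := by omega
    simp [hi, h1, h2]
  · simp [hi, testBit_high (b d).isLt (show n-1-d.val ≤ i by omega)]

lemma interp_step (a b : Vtx n) (j : ℕ) : hdV (interp a b j) = tlV (interp a b (j+1)) := by
  funext d
  apply Fin.ext
  simp only [hdV, tlV, interp]
  apply Nat.eq_of_testBit_eq
  intro m
  rw [show ((ofBits (fun i => if i + j < n-1-d.val then ((a d).val).testBit (i+j)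
      else if n ≤ i + j then ((b d).val).testBit (i + j - n) else false) (n-1-d.val)) / 2).testBit m
      = (ofBits (fun i => if i + j < n-1-d.val then ((a d).val).testBit (i+j)
      else if n ≤ i + j then ((b d).val).testBit (i + j - n) else false) (n-1-d.val)).testBit (m+1)
    from (Nat.testBit_succ _ m).symm]
  rw [Nat.testBit_mod_two_pow, testBit_ofBits, testBit_ofBits]
  have hks := klen_succ d
  by_cases hm : m + 1 < n - 1 - d.val
  · have hm' : m < n - 2 - d.val := by omega
    simp only [hm, hm', decide_true, Bool.true_and]
    rw [show m + 1 + j = m + (j + 1) from by omega]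
    simp [show m < n - 1 - d.val from by omega]
  · have hm' : ¬ (m < n - 2 - d.val) := by omega
    simp [hm, hm']

lemma conn_aux (hn3 : 3 ≤ n) (m : Vtx n → ℕ) (hm : ∀ v, 0 < m v) (a b : Vtx n) :
    Relation.ReflTransGen (fun x y => 0 < m y ∧ hdV x = tlV y) a b := by
  have key : ∀ j, Relation.ReflTransGen (fun x y => 0 < m y ∧ hdV x = tlV y) a (interp a b j) := by
    intro j
    induction j with
    | zero => rw [interp_zero]
    | succ j ih => exact Relation.ReflTransGen.tail ih ⟨hm _, interp_step a b j⟩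
  have := key n
  rwa [interp_n hn3] at this

lemma sum_len (hn3 : 3 ≤ n) : (∑ d : Fin (n-2), (n - 1 - d.val)) = n.choose 2 - 1 := by
  obtain ⟨p, rfl⟩ : ∃ p, n = p + 3 := ⟨n - 3, by omega⟩
  show (∑ d : Fin (p+1), (p + 2 - (d:ℕ))) = (p+3).choose 2 - 1
  rw [Fin.sum_univ_eq_sum_range (fun j => p + 2 - j) (p+1)]
  have h2 : ∑ j ∈ Finset.range (p+1), (p + 2 - j) = ∑ j ∈ Finset.range (p+1), (j + 2) := by
    have := Finset.sum_range_reflect (fun j => j + 2) (p+1)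
    rw [← this]
    exact Finset.sum_congr rfl (fun j hj => by
      have := Finset.mem_range.mp hj; omega)
  have h3 : ∑ j ∈ Finset.range (p+1), (j + 2) = (∑ j ∈ Finset.range (p+1), j) + 2 * (p+1) := by
    rw [Finset.sum_add_distrib]
    simp [Finset.sum_const, mul_comm]
  have h4 := Finset.sum_range_id_mul_two (p+1)
  have h5 : (p+3).choose 2 = (p+3) * (p+2) / 2 := by
    rw [Nat.choose_two_right]
    congr 1
  have h6 : (p+3) * (p+2) = (p+1) * p + 4 * (p+1) + 2 := by ring
  have h7 : (p + 1) * ((p+1) - 1) = (p+1) * p := by simp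
  rw [h2, h3, h5]
  omega

lemma card_Vtx (hn3 : 3 ≤ n) : Fintype.card (Vtx n) = 2 ^ (n.choose 2 - 1) := by
  rw [Fintype.card_pi]
  have h1 : ∀ d : Fin (n-2), Fintype.card (Fin (2 ^ (n-1-d.val))) = 2 ^ (n-1-d.val) :=
    fun d => Fintype.card_fin _
  rw [Finset.prod_congr rfl (fun d _ => h1 d)]
  rw [Finset.prod_pow_eq_pow_sum]
  rw [sum_len hn3]

lemma card_Pat (hn3 : 3 ≤ n) : Fintype.card (Pat n) = 2 ^ (2*n - 4) := by
  rw [Fintype.card_fun]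
  have h1 : Fintype.card (Bool × Bool) = 4 := by simp
  have h2 : Fintype.card (Fin (n-2)) = n - 2 := Fintype.card_fin _
  rw [h1, h2]
  have : (4 : ℕ) = 2^2 := by norm_num
  rw [this, ← pow_mul]
  congr 1
  omega

lemma exists_invariant_subset {γ : Type*} [Fintype γ] [DecidableEq γ] (σ : γ → γ)
    (hinv : ∀ x, σ (σ x) = x) (x₀ : γ) (hfix : σ x₀ = x₀) :
    ∀ s, s ≤ Fintype.card γ → ∃ T : Finset γ, T.card = s ∧ ∀ x ∈ T, σ x ∈ T := by
  intro s
  induction s using Nat.strong_induction_on with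
  | _ s ih =>
    intro hs
    match s, ih, hs with
    | 0, _, _ => exact ⟨∅, by simp, by simp⟩
    | 1, _, _ =>
      refine ⟨{x₀}, by simp, ?_⟩
      intro x hx
      simp only [Finset.mem_singleton] at hx ⊢
      subst hx; exact hfix
    | (s+2), ih, hs => ?_
    obtain ⟨T, hTcard, hTinv⟩ := ih s (by omega) (by omega)
    have hTc : ∀ x, x ∉ T → σ x ∉ T := by
      intro x hx hcon
      exact hx (by have := hTinv _ hcon; rwa [hinv] at this)
    have hcompl : 2 ≤ (Finset.univ \ T).card := by
      rw [Finset.card_sdiff_of_subset (Finset.subset_univ T), Finset.card_univ]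
      omega
    obtain ⟨x, hx⟩ := Finset.card_pos.mp (by omega : 0 < (Finset.univ \ T).card)
    have hxT : x ∉ T := (Finset.mem_sdiff.mp hx).2
    by_cases hsx : σ x = x
    · have herase : 0 < ((Finset.univ \ T).erase x).card := by
        rw [Finset.card_erase_of_mem hx]; omega
      obtain ⟨y, hy⟩ := Finset.card_pos.mp herase
      have hyx : y ≠ x := (Finset.mem_erase.mp hy).1
      have hyT : y ∉ T := (Finset.mem_sdiff.mp (Finset.mem_erase.mp hy).2).2
      by_cases hsy : σ y = y
      · refine ⟨insert x (insert y T), ?_, ?_⟩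
        · rw [Finset.card_insert_of_notMem (by simp [hxT, Ne.symm hyx]),
            Finset.card_insert_of_notMem hyT, hTcard]
        · intro z hz
          simp only [Finset.mem_insert] at hz ⊢
          rcases hz with rfl | rfl | hz
          · left; exact hsx
          · right; left; exact hsy
          · right; right; exact hTinv z hz
      · have hsyT : σ y ∉ T := hTc y hyT
        have hyn : y ∉ insert (σ y) T := by
          simp only [Finset.mem_insert]
          push_neg
          exact ⟨fun h => hsy h.symm, hyT⟩
        refine ⟨insert y (insert (σ y) T), ?_, ?_⟩
        · rw [Finset.card_insert_of_notMem hyn,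
            Finset.card_insert_of_notMem hsyT, hTcard]
        · intro z hz
          simp only [Finset.mem_insert] at hz ⊢
          rcases hz with rfl | rfl | hz
          · right; left; rfl
          · left; exact hinv y
          · right; right; exact hTinv z hz
    · have hsxT : σ x ∉ T := hTc x hxT
      have hxn : x ∉ insert (σ x) T := by
        simp only [Finset.mem_insert]
        push_neg
        exact ⟨fun h => hsx h.symm, hxT⟩
      refine ⟨insert x (insert (σ x) T), ?_, ?_⟩
      · rw [Finset.card_insert_of_notMem hxn,
          Finset.card_insert_of_notMem hsxT, hTcard]
      · intro z hz
        simp only [Finset.mem_insert] at hz ⊢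
        rcases hz with rfl | rfl | hz
        · right; left; rfl
        · left; exact hinv x
        · right; right; exact hTinv z hz


lemma split_top {x k : ℕ} (hx : x < 2^(k+1)) : x / 2^k ≤ 1 := by
  have hlt : x / 2^k < 2 := Nat.div_lt_of_lt_mul (by rw [← pow_succ]; exact hx)
  omega

/-- rotate bottom bit to top -/
def rotV (v : Vtx n) : Vtx n := fun d =>
  ⟨2^(n-2-d.val) * ((v d).val % 2) + (v d).val / 2, by
    have h := (v d).isLt
    have h2 : (v d).val < 2^((n-2-d.val)+1) := by rw [← klen_succ d]; exact h
    have h3 := split_top h2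
    have h4 : (v d).val / 2 < 2^(n-2-d.val) := by
      rw [pow_succ] at h2
      exact Nat.div_lt_of_lt_mul (by omega)
    have hk : (2:ℕ)^(n-1-d.val) = 2^(n-2-d.val) * 2 := by rw [klen_succ d, pow_succ]
    have h6 : 2^(n-2-d.val) * ((v d).val % 2) ≤ 2^(n-2-d.val) * 1 :=
      Nat.mul_le_mul_left _ (by omega)
    omega⟩

/-- rotate top bit to bottom -/
def rotV' (x : Vtx n) : Vtx n := fun d =>
  ⟨((x d).val % 2^(n-2-d.val)) * 2 + (x d).val / 2^(n-2-d.val), by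
    have h := (x d).isLt
    have h2 : (x d).val < 2^((n-2-d.val)+1) := by rw [← klen_succ d]; exact h
    have h3 := split_top h2
    have h4 : (x d).val % 2^(n-2-d.val) < 2^(n-2-d.val) := Nat.mod_lt _ (Nat.two_pow_pos _)
    have hk : (2:ℕ)^(n-1-d.val) = 2^(n-2-d.val) * 2 := by rw [klen_succ d, pow_succ]
    omega⟩

lemma tlV_rotV (v : Vtx n) : tlV (rotV v) = hdV v := by
  funext d
  apply Fin.ext
  simp only [tlV, rotV, hdV]
  rw [Nat.mul_add_mod]
  apply Nat.mod_eq_of_lt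
  have h2 : (v d).val < 2^((n-2-d.val)+1) := by rw [← klen_succ d]; exact (v d).isLt
  rw [pow_succ] at h2
  exact Nat.div_lt_of_lt_mul (by omega)

lemma hdV_rotV' (x : Vtx n) : hdV (rotV' x) = tlV x := by
  funext d
  apply Fin.ext
  simp only [hdV, rotV', tlV]
  have h2 : (x d).val < 2^((n-2-d.val)+1) := by rw [← klen_succ d]; exact (x d).isLt
  have h3 := split_top h2
  rw [mul_comm, Nat.mul_add_div (by norm_num)]
  rw [Nat.div_eq_of_lt (show (x d).val / 2^(n-2-d.val) < 2 by omega)]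
  omega

lemma rotV'_rotV (v : Vtx n) : rotV' (rotV v) = v := by
  funext d
  apply Fin.ext
  simp only [rotV', rotV]
  have h2 : (v d).val < 2^((n-2-d.val)+1) := by rw [← klen_succ d]; exact (v d).isLt
  rw [pow_succ] at h2
  have h4 : (v d).val / 2 < 2^(n-2-d.val) := Nat.div_lt_of_lt_mul (by omega)
  have h5 : (v d).val % 2 < 2 := Nat.mod_lt _ (by norm_num)
  have e1 : (2^(n-2-d.val) * ((v d).val % 2) + (v d).val / 2) % 2^(n-2-d.val)
      = (v d).val / 2 := by rw [Nat.mul_add_mod, Nat.mod_eq_of_lt h4]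
  have e2 : (2^(n-2-d.val) * ((v d).val % 2) + (v d).val / 2) / 2^(n-2-d.val)
      = (v d).val % 2 := by
    rw [Nat.mul_add_div (Nat.two_pow_pos _), Nat.div_eq_of_lt h4]
    omega
  rw [e1, e2]
  have := Nat.div_add_mod ((v d).val) 2
  omega

lemma rotV_rotV' (x : Vtx n) : rotV (rotV' x) = x := by
  funext d
  apply Fin.ext
  simp only [rotV', rotV]
  have h2 : (x d).val < 2^((n-2-d.val)+1) := by rw [← klen_succ d]; exact (x d).isLt
  have h3 := split_top h2
  have h4 : (x d).val % 2^(n-2-d.val) < 2^(n-2-d.val) := Nat.mod_lt _ (Nat.two_pow_pos _)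
  have h5 : ((x d).val % 2^(n-2-d.val) * 2 + (x d).val / 2^(n-2-d.val)) % 2
      = (x d).val / 2^(n-2-d.val) := by
    rw [mul_comm, Nat.mul_add_mod]
    exact Nat.mod_eq_of_lt (by omega)
  have h6 : ((x d).val % 2^(n-2-d.val) * 2 + (x d).val / 2^(n-2-d.val)) / 2
      = (x d).val % 2^(n-2-d.val) := by
    rw [mul_comm, Nat.mul_add_div (by norm_num)]
    rw [Nat.div_eq_of_lt (show (x d).val / 2^(n-2-d.val) < 2 by omega)]
    omega
  rw [h5, h6]
  have := Nat.div_add_mod ((x d).val) (2^(n-2-d.val))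
  omega

open Finset in
lemma card_fiber_eq (u : Uvx n) :
    (univ.filter (fun v : Vtx n => hdV v = u)).card
      = (univ.filter (fun v : Vtx n => tlV v = u)).card := by
  apply Finset.card_bij' (fun v _ => rotV v) (fun x _ => rotV' x)
  · intro v hv
    simp only [mem_filter, mem_univ, true_and] at hv ⊢
    rw [tlV_rotV, hv]
  · intro x hx
    simp only [mem_filter, mem_univ, true_and] at hx ⊢
    rw [hdV_rotV', hx]
  · intro v _; exact rotV'_rotV v
  · intro x _; exact rotV_rotV' x

open Finset in
lemma card_fiberT_eq (T' : Finset (Pat n)) (hsw : ∀ P ∈ T', swapP P ∈ T') (u : Uvx n) :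
    ((univ.filter (fun v : Vtx n => hdV v = u)).filter (fun v => v ∈ T'.image patV)).card
      = ((univ.filter (fun v : Vtx n => tlV v = u)).filter (fun v => v ∈ T'.image patV)).card := by
  apply Finset.card_bij (fun v _ => sigV v)
  · intro v hv
    simp only [mem_filter, mem_univ, true_and, mem_image] at hv ⊢
    obtain ⟨hu, P, hP, rfl⟩ := hv
    rw [sigV_patV]
    constructor
    · rw [← hdV_patV, hu]
    · exact ⟨swapP P, hsw P hP, rfl⟩
  · intro v hv v' hv' heq
    simp only [mem_filter, mem_univ, true_and, mem_image] at hv hv'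
    obtain ⟨_, P, _, rfl⟩ := hv
    obtain ⟨_, Q, _, rfl⟩ := hv'
    rw [sigV_patV, sigV_patV] at heq
    have := patV_inj heq
    have hPQ : P = Q := by
      have := congrArg swapP this
      rwa [swapP_invol, swapP_invol] at this
    rw [hPQ]
  · intro x hx
    simp only [mem_filter, mem_univ, true_and, mem_image] at hx
    obtain ⟨hu, Q, hQ, rfl⟩ := hx
    refine ⟨patV (swapP Q), ?_, ?_⟩
    · simp only [mem_filter, mem_univ, true_and, mem_image]
      constructor
      · rw [hdV_patV, swapP_invol, hu]
      · exact ⟨swapP Q, hsw Q hQ, rfl⟩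
    · rw [sigV_patV, swapP_invol]

open Finset in
lemma sum_ite_card {γ : Type*} [DecidableEq γ] (S T : Finset γ) (c₁ c₂ : ℕ) :
    ∑ x ∈ S, (if x ∈ T then c₁ else c₂)
      = c₁ * (S.filter (fun x => x ∈ T)).card + c₂ * (S.card - (S.filter (fun x => x ∈ T)).card) := by
  rw [← Finset.sum_filter_add_sum_filter_not S (fun x => x ∈ T)]
  have h1 : ∑ x ∈ S.filter (fun x => x ∈ T), (if x ∈ T then c₁ else c₂)
      = c₁ * (S.filter (fun x => x ∈ T)).card := by
    rw [Finset.sum_congr rfl (fun x hx => if_pos (Finset.mem_filter.mp hx).2)]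
    simp [mul_comm]
  have h2 : ∑ x ∈ S.filter (fun x => ¬ x ∈ T), (if x ∈ T then c₁ else c₂)
      = c₂ * (S.filter (fun x => ¬ x ∈ T)).card := by
    rw [Finset.sum_congr rfl (fun x hx => if_neg (Finset.mem_filter.mp hx).2)]
    simp [mul_comm]
  have h3 := Finset.card_filter_add_card_filter_not (s := S) (p := (fun x => x ∈ T))
  have h4 : (S.filter (fun x => ¬ x ∈ T)).card = S.card - (S.filter (fun x => x ∈ T)).card := by
    omega
  rw [h1, h2, h4]

open Finset in
theorem exists_walk (hn3 : 3 ≤ n) (ℓ : ℕ) [NeZero ℓ]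
    (hℓ : (∃ s ≤ 2^(2*n-4), ℓ = 2^(n.choose 2 - 1) + s) ∨
          (∃ t ≤ 2^(2*n-4), ℓ + t = 2^(n.choose 2))) :
    ∃ w : Fin ℓ → Vtx n, (∀ i : Fin ℓ, hdV (w i) = tlV (w (i + 1))) ∧
      ∀ v : Vtx n, 1 ≤ (univ.filter (fun i => w i = v)).card ∧
        (univ.filter (fun i => w i = v)).card ≤ 2 := by
  have hch : ∀ p : ℕ, (p+3).choose 2 = (p*p + 5*p + 6)/2 := by
    intro p
    rw [Nat.choose_two_right]
    congr 1
    have h31 : p + 3 - 1 = p + 2 := by omega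
    rw [h31]
    ring
  have hexp : 2*n - 4 ≤ n.choose 2 - 1 := by
    obtain ⟨p, rfl⟩ : ∃ p, n = p + 3 := ⟨n - 3, by omega⟩
    rw [hch p]
    omega
  have hpow : (2:ℕ)^(2*n-4) ≤ 2^(n.choose 2 - 1) := Nat.pow_le_pow_right (by norm_num) hexp
  have hC1 : 1 ≤ n.choose 2 := by
    obtain ⟨p, rfl⟩ : ∃ p, n = p + 3 := ⟨n - 3, by omega⟩
    rw [hch p]
    omega
  have hpow2 : (2:ℕ)^(n.choose 2) = 2 * 2^(n.choose 2 - 1) := by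
    conv_lhs => rw [show n.choose 2 = (n.choose 2 - 1) + 1 by omega]
    rw [pow_succ, mul_comm]
  obtain ⟨c₁, c₂, s, hc₁₂, hs, hsum⟩ :
      ∃ c₁ c₂ s, ((c₁ = 2 ∧ c₂ = 1) ∨ (c₁ = 1 ∧ c₂ = 2)) ∧ s ≤ 2^(2*n-4) ∧
        c₁ * s + c₂ * (2^(n.choose 2 - 1) - s) = ℓ := by
    rcases hℓ with ⟨s, hs, rfl⟩ | ⟨t, ht, hℓt⟩
    · exact ⟨2, 1, s, Or.inl ⟨rfl, rfl⟩, hs, by omega⟩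
    · exact ⟨1, 2, t, Or.inr ⟨rfl, rfl⟩, ht, by omega⟩
  obtain ⟨T', hT'card, hT'inv⟩ := exists_invariant_subset (swapP (n := n)) swapP_invol
    (fun _ => (false, false)) rfl s (by rw [card_Pat hn3]; exact hs)
  set TV := T'.image patV with hTV
  set m : Vtx n → ℕ := fun v => if v ∈ TV then c₁ else c₂ with hm
  have hmpos : ∀ v, 0 < m v := by
    intro v; simp only [hm]; split_ifs <;> omega
  have hbal : ∀ u, outS tlV m u = inS hdV m u := by
    intro u
    rw [outS, inS, hm]
    rw [sum_ite_card, sum_ite_card]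
    rw [card_fiber_eq u, card_fiberT_eq T' hT'inv u]
  have hconn : ∀ a b : Vtx n, 0 < m a → 0 < m b →
      Relation.ReflTransGen (fun x y => 0 < m y ∧ hdV x = tlV y) a b :=
    fun a b _ _ => conn_aux hn3 m hmpos a b
  have hTVcard : TV.card = s := by
    rw [hTV, Finset.card_image_of_injective T' patV_inj, hT'card]
  have hsummv : ℓ = ∑ v, m v := by
    rw [hm]
    rw [sum_ite_card univ TV c₁ c₂]
    have h1 : univ.filter (fun x => x ∈ TV) = TV := by
      ext x; simp
    rw [h1, hTVcard, Finset.card_univ, card_Vtx hn3]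
    omega
  obtain ⟨w, hstep, hcnt⟩ := euler_fin (hd := hdV) (tl := tlV) m hbal hconn ℓ hsummv
  refine ⟨w, hstep, fun v => ?_⟩
  rw [hcnt v]
  have := hmpos v
  constructor
  · omega
  · simp only [hm]; split_ifs <;> omega

end GUP


namespace Stmt2

/-- Position of the `a`-th vertex of the `n`-window starting at `i` in `Z_ℓ`. -/
def wpos {ℓ : ℕ} (i : Fin ℓ) {n : ℕ} (a : Fin n) : Fin ℓ :=
  ⟨(i.val + a.val) % ℓ, Nat.mod_lt _ i.pos⟩

/-- Cyclic distance between positions `a` and `b` in `Z_ℓ`. -/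
def cyclicDist (ℓ a b : ℕ) : ℕ := min ((a + ℓ - b) % ℓ) ((b + ℓ - a) % ℓ)

/-- `S` is a set of diamond edges lying inside the `n`-window starting at `i`. -/
def ValidS (n : ℕ) {ℓ : ℕ} (D : SimpleGraph (Fin ℓ)) (i : Fin ℓ)
    (S : Set (Sym2 (Fin ℓ))) : Prop :=
  ∀ e ∈ S, ∃ a b : Fin n, e = s(wpos i a, wpos i b) ∧ D.Adj (wpos i a) (wpos i b)

/-- The resolved `n`-window at `(i, S)` equals the graph `H` on `{1,…,n}`:
`a` and `b` are adjacent in `H` iff the corresponding pair of the cycle is an edge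
or lies in `S`. -/
def Resolves (n : ℕ) {ℓ : ℕ} (E : SimpleGraph (Fin ℓ)) (i : Fin ℓ)
    (S : Set (Sym2 (Fin ℓ))) (H : SimpleGraph (Fin n)) : Prop :=
  ∀ a b : Fin n, H.Adj a b ↔ (E.Adj (wpos i a) (wpos i b) ∨ s(wpos i a, wpos i b) ∈ S)

/-- A graph universal partial cycle of length `ℓ` for the labeled graphs on `{1,…,n}`:
a cyclically ordered partial graph on `Z_ℓ` (edge set `E`, diamond edge set `D`, the
remaining pairs being non-edges), with no edge or diamond edge at cyclic distance `≥ n`,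
such that every simple graph `H` on `{1,…,n}` is the resolved `n`-window of exactly one
pair `(i, S)` with `i ∈ Z_ℓ` and `S` a subset of the diamond edges inside the window. -/
def IsGupcycle (n ℓ : ℕ) (E D : SimpleGraph (Fin ℓ)) : Prop :=
  (∀ a b : Fin ℓ, ¬(E.Adj a b ∧ D.Adj a b)) ∧
  (∀ a b : Fin ℓ, E.Adj a b ∨ D.Adj a b → cyclicDist ℓ a.val b.val < n) ∧
  (∀ H : SimpleGraph (Fin n), ∃! p : Fin ℓ × Set (Sym2 (Fin ℓ)),
    ValidS n D p.1 p.2 ∧ Resolves n E p.1 p.2 H)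


open GUP Finset Fin.NatCast

section Main

variable {n ℓ : ℕ} [NeZero ℓ]

def labD (w : Fin ℓ → Vtx n) (j : Fin ℓ) (d : Fin (n-2)) : Bool := ((w j d).val).testBit 0

def cntV (w : Fin ℓ → Vtx n) (v : Vtx n) : ℕ := (univ.filter (fun i => w i = v)).card

def isSnd (w : Fin ℓ → Vtx n) (j : Fin ℓ) : Bool := decide (∃ j' : Fin ℓ, j' < j ∧ w j' = w j)

def labN (w : Fin ℓ → Vtx n) (j : Fin ℓ) : Option Bool :=
  if cntV w (w j) = 2 then some (isSnd w j) else none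

def lab (w : Fin ℓ → Vtx n) (j : Fin ℓ) (d : ℕ) : Option Bool :=
  if h : 1 ≤ d ∧ d ≤ n-2 then some (labD w j ⟨d-1, by omega⟩)
  else if d = n-1 then labN w j else none

def EAdj (w : Fin ℓ → Vtx n) (x y : Fin ℓ) : Prop :=
  x ≠ y ∧ ∃ d : ℕ, 1 ≤ d ∧ d < n ∧
    ((y = x + (d : Fin ℓ) ∧ lab w x d = some true) ∨
     (x = y + (d : Fin ℓ) ∧ lab w y d = some true))

def DAdj (w : Fin ℓ → Vtx n) (x y : Fin ℓ) : Prop :=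
  x ≠ y ∧ ∃ d : ℕ, 1 ≤ d ∧ d < n ∧
    ((y = x + (d : Fin ℓ) ∧ lab w x d = none) ∨
     (x = y + (d : Fin ℓ) ∧ lab w y d = none))

lemma val_add_nat (x : Fin ℓ) (d : ℕ) : (x + (d : Fin ℓ)).val = (x.val + d) % ℓ := by
  rw [Fin.add_def, Fin.val_natCast]
  conv_rhs => rw [Nat.add_mod]
  rw [Nat.mod_eq_of_lt x.isLt]

lemma add_nat_cancel (x : Fin ℓ) {d d' : ℕ} (hd : d < ℓ) (hd' : d' < ℓ)
    (h : x + (d : Fin ℓ) = x + (d' : Fin ℓ)) : d = d' := by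
  have h2 : (x.val + d) % ℓ = (x.val + d') % ℓ := by
    rw [← val_add_nat, ← val_add_nat, h]
  have h3 : d % ℓ = d' % ℓ := Nat.ModEq.add_left_cancel' x.val h2
  rwa [Nat.mod_eq_of_lt hd, Nat.mod_eq_of_lt hd'] at h3

lemma add_nat_cross (x y : Fin ℓ) {d d' : ℕ} (hd1 : 1 ≤ d) (hd : d < ℓ)
    (hd'1 : 1 ≤ d') (hd' : d' < ℓ)
    (h : y = x + (d : Fin ℓ)) (h' : x = y + (d' : Fin ℓ)) : d + d' = ℓ := by
  have hx := x.isLt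
  have hy := y.isLt
  have e1 : y.val = (x.val + d) % ℓ := by rw [h, val_add_nat]
  have e2 : x.val = (y.val + d') % ℓ := by rw [h'] ; rw [val_add_nat]
  rcases lt_or_ge (x.val + d) ℓ with hc | hc
  · rw [Nat.mod_eq_of_lt hc] at e1
    rw [e1] at e2
    rcases lt_or_ge (x.val + d + d') ℓ with hc2 | hc2
    · rw [Nat.mod_eq_of_lt hc2] at e2; omega
    · rw [Nat.mod_eq_sub_mod hc2, Nat.mod_eq_of_lt (by omega)] at e2; omega
  · have e3 : (x.val + d) % ℓ = x.val + d - ℓ := by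
      rw [Nat.mod_eq_sub_mod hc, Nat.mod_eq_of_lt (by omega)]
    rw [e3] at e1
    rw [e1] at e2
    rcases lt_or_ge (x.val + d - ℓ + d') ℓ with hc2 | hc2
    · rw [Nat.mod_eq_of_lt hc2] at e2; omega
    · rw [Nat.mod_eq_sub_mod hc2, Nat.mod_eq_of_lt (by omega)] at e2; omega

lemma ne_add_nat (x : Fin ℓ) {d : ℕ} (h1 : 1 ≤ d) (h2 : d < ℓ) : x ≠ x + (d : Fin ℓ) := by
  intro h
  have h3 := congrArg Fin.val h
  rw [val_add_nat] at h3
  have hx := x.isLt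
  rcases lt_or_ge (x.val + d) ℓ with hc | hc
  · rw [Nat.mod_eq_of_lt hc] at h3; omega
  · rw [Nat.mod_eq_sub_mod hc, Nat.mod_eq_of_lt (by omega)] at h3; omega

lemma key_mod (x : Fin ℓ) {d : ℕ} (hd : d < ℓ) :
    ((x + (d : Fin ℓ)).val + ℓ - x.val) % ℓ = d := by
  have hx := x.isLt
  rw [val_add_nat]
  rcases lt_or_ge (x.val + d) ℓ with hc | hc
  · rw [Nat.mod_eq_of_lt hc, show x.val + d + ℓ - x.val = d + ℓ from by omega,
      Nat.add_mod_right, Nat.mod_eq_of_lt hd]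
  · have e0 : (x.val + d) % ℓ = x.val + d - ℓ := by
      rw [Nat.mod_eq_sub_mod hc]
      exact Nat.mod_eq_of_lt (by omega)
    rw [e0, show x.val + d - ℓ + ℓ - x.val = d from by omega]
    exact Nat.mod_eq_of_lt hd

variable (w : Fin ℓ → Vtx n)

lemma lab_small (j : Fin ℓ) (d : ℕ) (h : 1 ≤ d ∧ d ≤ n-2) :
    lab w j d = some (labD w j ⟨d-1, by omega⟩) := dif_pos h

lemma lab_last (j : Fin ℓ) : lab w j (n-1) = labN w j := by
  rw [lab, dif_neg (by omega), if_pos rfl]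

lemma sum_cntV : ∑ v : Vtx n, cntV w v = ℓ := by
  have h := Finset.card_eq_sum_card_fiberwise
    (f := w) (s := (univ : Finset (Fin ℓ))) (t := (univ : Finset (Vtx n)))
    (fun x _ => mem_univ _)
  rw [Finset.card_univ, Fintype.card_fin] at h
  exact h.symm

lemma two_pow_bounds (hn : 3 ≤ n) : 2*n - 2 ≤ 2^(n-1) ∧ 2^(n-1) ≤ 2^(n.choose 2 - 1) := by
  constructor
  · have h1 : n - 2 < 2^(n-2) := Nat.lt_two_pow_self
    have h2 : 2 * (n-1) ≤ 2 * 2^(n-2) := by omega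
    have h3 : (2:ℕ) * 2^(n-2) = 2^(n-1) := by
      rw [← pow_succ']
      congr 1
      omega
    omega
  · apply Nat.pow_le_pow_right (by norm_num)
    obtain ⟨p, rfl⟩ : ∃ p, n = p + 3 := ⟨n - 3, by omega⟩
    rw [Nat.choose_two_right]
    have h31 : p + 3 - 1 = p + 2 := by omega
    rw [h31]
    have : (p+3) * (p+2) = p*p + 5*p + 6 := by ring
    rw [this]
    omega

lemma cnt_one_of_tight (hn : 3 ≤ n) (hc1 : ∀ v : Vtx n, 1 ≤ cntV w v) (htight : ℓ = 2*n-2) :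
    ∀ v, cntV w v = 1 := by
  have hsum := sum_cntV w
  have hb := two_pow_bounds hn
  intro v
  by_contra hv
  have h2 : 2 ≤ cntV w v := by have := hc1 v; omega
  have hbig : Fintype.card (Vtx n) + 1 ≤ ∑ x : Vtx n, cntV w x := by
    rw [Finset.sum_eq_sum_sdiff_singleton_add (mem_univ v) (cntV w)]
    have hrest : (univ \ {v}).card ≤ ∑ x ∈ univ \ {v}, cntV w x := by
      calc (univ \ {v}).card = ∑ x ∈ univ \ {v}, 1 := by simp
        _ ≤ _ := Finset.sum_le_sum (fun x _ => hc1 x)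
    have hc : ((univ : Finset (Vtx n)) \ {v}).card = Fintype.card (Vtx n) - 1 := by
      rw [Finset.card_sdiff_of_subset (by simp)]
      simp [Finset.card_univ]
    have hcpos : 1 ≤ Fintype.card (Vtx n) := Fintype.card_pos
    omega
  rw [hsum, GUP.card_Vtx hn] at hbig
  omega

lemma labN_none_of_tight (hn : 3 ≤ n) (hc1 : ∀ v : Vtx n, 1 ≤ cntV w v) (htight : ℓ = 2*n-2) (j : Fin ℓ) :
    labN w j = none := by
  rw [labN, if_neg]
  rw [cnt_one_of_tight w hn hc1 htight (w j)]
  omega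

lemma eadj_iff (hn : 3 ≤ n) (hℓn : 2*n-2 ≤ ℓ) (hc1 : ∀ v : Vtx n, 1 ≤ cntV w v)
    (x : Fin ℓ) (d : ℕ) (h1 : 1 ≤ d) (h2 : d < n) :
    EAdj w x (x + (d : Fin ℓ)) ↔ lab w x d = some true := by
  have hdl : d < ℓ := by omega
  constructor
  · rintro ⟨hne, d₀, hd₀1, hd₀n, ⟨heq, hlab⟩ | ⟨heq, hlab⟩⟩
    · have hdd : d = d₀ := add_nat_cancel x hdl (by omega) heq
      rwa [hdd]
    · have hsum := add_nat_cross x (x + (d : Fin ℓ)) h1 hdl hd₀1 (by omega) rfl heq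
      have hd : d = n-1 := by omega
      have hd₀ : d₀ = n-1 := by omega
      have htight : ℓ = 2*n-2 := by omega
      rw [hd₀, lab_last, labN_none_of_tight w hn hc1 htight] at hlab
      exact absurd hlab (by simp)
  · intro hlab
    exact ⟨ne_add_nat x h1 hdl, d, h1, h2, Or.inl ⟨rfl, hlab⟩⟩

lemma dadj_iff (hn : 3 ≤ n) (hℓn : 2*n-2 ≤ ℓ) (hc1 : ∀ v : Vtx n, 1 ≤ cntV w v)
    (x : Fin ℓ) (d : ℕ) (h1 : 1 ≤ d) (h2 : d < n) :
    DAdj w x (x + (d : Fin ℓ)) ↔ lab w x d = none := by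
  have hdl : d < ℓ := by omega
  constructor
  · rintro ⟨hne, d₀, hd₀1, hd₀n, ⟨heq, hlab⟩ | ⟨heq, hlab⟩⟩
    · have hdd : d = d₀ := add_nat_cancel x hdl (by omega) heq
      rwa [hdd]
    · have hsum := add_nat_cross x (x + (d : Fin ℓ)) h1 hdl hd₀1 (by omega) rfl heq
      have hd : d = n-1 := by omega
      have htight : ℓ = 2*n-2 := by omega
      rw [hd, lab_last]
      exact labN_none_of_tight w hn hc1 htight x
  · intro hlab
    exact ⟨ne_add_nat x h1 hdl, d, h1, h2, Or.inl ⟨rfl, hlab⟩⟩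

def Eg : SimpleGraph (Fin ℓ) where
  Adj := EAdj w
  symm := ⟨by
    rintro x y ⟨hne, d, h1, h2, hc⟩
    exact ⟨hne.symm, d, h1, h2, hc.symm⟩⟩
  loopless := ⟨fun x h => h.1 rfl⟩

def Dg : SimpleGraph (Fin ℓ) where
  Adj := DAdj w
  symm := ⟨by
    rintro x y ⟨hne, d, h1, h2, hc⟩
    exact ⟨hne.symm, d, h1, h2, hc.symm⟩⟩
  loopless := ⟨fun x h => h.1 rfl⟩

@[simp] lemma Eg_adj (x y : Fin ℓ) : (Eg w).Adj x y ↔ EAdj w x y := Iff.rfl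
@[simp] lemma Dg_adj (x y : Fin ℓ) : (Dg w).Adj x y ↔ DAdj w x y := Iff.rfl

/-- Condition 1 of gupcycles : no pair is both an edge and a diamond edge. -/
lemma cond1 (hn : 3 ≤ n) (hℓn : 2*n-2 ≤ ℓ) (hc1 : ∀ v : Vtx n, 1 ≤ cntV w v) :
    ∀ x y : Fin ℓ, ¬ ((Eg w).Adj x y ∧ (Dg w).Adj x y) := by
  rintro x y ⟨⟨hne, d, h1, h2, hcE⟩, ⟨hne', d', h1', h2', hcD⟩⟩
  have hdl : d < ℓ := by omega
  have hdl' : d' < ℓ := by omega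
  rcases hcE with ⟨heqE, hlabE⟩ | ⟨heqE, hlabE⟩ <;> rcases hcD with ⟨heqD, hlabD⟩ | ⟨heqD, hlabD⟩
  · have : d = d' := add_nat_cancel x hdl hdl' (heqE ▸ heqD)
    subst this
    rw [hlabE] at hlabD
    exact absurd hlabD (by simp)
  · have hsum := add_nat_cross x y h1 hdl h1' hdl' heqE heqD
    have htight : ℓ = 2*n-2 := by omega
    have hd' : d' = n-1 := by omega
    rw [hd', lab_last, labN_none_of_tight w hn hc1 htight] at hlabD
    have hd : d = n-1 := by omega
    rw [hd, lab_last, labN_none_of_tight w hn hc1 htight] at hlabE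
    exact absurd hlabE (by simp)
  · have hsum := add_nat_cross x y h1' hdl' h1 hdl heqD heqE
    have htight : ℓ = 2*n-2 := by omega
    have hd : d = n-1 := by omega
    rw [hd, lab_last, labN_none_of_tight w hn hc1 htight] at hlabE
    exact absurd hlabE (by simp)
  · have : d' = d := add_nat_cancel y hdl' hdl (heqD ▸ heqE)
    subst this
    rw [hlabE] at hlabD
    exact absurd hlabD (by simp)

lemma cyclic_le (x : Fin ℓ) {d : ℕ} (hd : d < ℓ) :
    cyclicDist ℓ x.val (x + (d : Fin ℓ)).val ≤ d := by
  have h := key_mod x hd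
  calc cyclicDist ℓ x.val (x + (d : Fin ℓ)).val
      ≤ ((x + (d : Fin ℓ)).val + ℓ - x.val) % ℓ := min_le_right _ _
    _ = d := h

lemma cyclicDist_comm (a b : ℕ) : cyclicDist ℓ a b = cyclicDist ℓ b a := by
  rw [cyclicDist, cyclicDist, min_comm]

/-- Condition 2 : all edges and diamond edges are at cyclic distance < n. -/
lemma cond2 (hℓn : 2*n-2 ≤ ℓ) : ∀ x y : Fin ℓ, (Eg w).Adj x y ∨ (Dg w).Adj x y →
    cyclicDist ℓ x.val y.val < n := by
  have key : ∀ (x y : Fin ℓ) (d : ℕ), 1 ≤ d → d < n → y = x + (d : Fin ℓ) →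
      cyclicDist ℓ x.val y.val < n := by
    intro x y d h1 h2 heq
    subst heq
    have := cyclic_le (ℓ := ℓ) x (show d < ℓ by omega)
    omega
  rintro x y (⟨hne, d, h1, h2, ⟨heq, _⟩ | ⟨heq, _⟩⟩ | ⟨hne, d, h1, h2, ⟨heq, _⟩ | ⟨heq, _⟩⟩)
  · exact key x y d h1 h2 heq
  · rw [cyclicDist_comm]; exact key y x d h1 h2 heq
  · exact key x y d h1 h2 heq
  · rw [cyclicDist_comm]; exact key y x d h1 h2 heq

/- ### window reading and decoding -/

lemma wpos_eq (i : Fin ℓ) (a : Fin n) : wpos i a = i + ((a.val : ℕ) : Fin ℓ) := by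
  apply Fin.ext
  rw [val_add_nat]
  rfl

lemma wpos_inj (hnℓ : n ≤ ℓ) (i : Fin ℓ) {a b : Fin n} (h : wpos i a = wpos i b) : a = b := by
  rw [wpos_eq, wpos_eq] at h
  exact Fin.ext (add_nat_cancel i (lt_of_lt_of_le a.isLt hnℓ) (lt_of_lt_of_le b.isLt hnℓ) h)

lemma wpos_pair (i : Fin ℓ) {a b : Fin n} (hab : a.val < b.val) :
    wpos i b = (wpos i a) + ((b.val - a.val : ℕ) : Fin ℓ) := by
  apply Fin.ext
  rw [val_add_nat]
  show (i.val + b.val) % ℓ = ((i.val + a.val) % ℓ + (b.val - a.val)) % ℓ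
  rw [Nat.mod_add_mod, show i.val + a.val + (b.val - a.val) = i.val + b.val from by omega]

lemma wpos_zero (i : Fin ℓ) {a : Fin n} (ha : a.val = 0) : wpos i a = i := by
  apply Fin.ext
  show (i.val + a.val) % ℓ = i.val
  rw [ha, Nat.add_zero, Nat.mod_eq_of_lt i.isLt]

lemma bitprop (hstep : ∀ i, GUP.hdV (w i) = GUP.tlV (w (i+1))) :
    ∀ (a : ℕ) (i : Fin ℓ) (d : Fin (n-2)), a < n-1-d.val →
      ((w i d).val).testBit a = labD w (i + (a : Fin ℓ)) d := by
  intro a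
  induction a with
  | zero =>
    intro i d _
    rw [Nat.cast_zero, add_zero]
    rfl
  | succ a ih =>
    intro i d ha
    have hstepb := GUP.step_testBit (hstep i) d a (by omega)
    rw [hstepb, ih (i+1) d (by omega)]
    have hcast : i + ((a+1 : ℕ) : Fin ℓ) = i + 1 + ((a : ℕ) : Fin ℓ) := by
      push_cast
      abel
    rw [hcast]

open Classical in
noncomputable def stV (H : SimpleGraph (Fin n)) : Vtx n := fun d =>
  ⟨GUP.ofBits (fun a => if h : a + d.val + 1 < n then
      decide (H.Adj ⟨a, by omega⟩ ⟨a + d.val + 1, h⟩) else false) (n-1-d.val),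
   GUP.ofBits_lt _ _⟩

lemma stV_bit (H : SimpleGraph (Fin n)) (d : Fin (n-2)) (a : ℕ) (ha : a < n-1-d.val) :
    (((stV H) d).val).testBit a = true ↔
      H.Adj ⟨a, by omega⟩ ⟨a + d.val + 1, by have := d.isLt; omega⟩ := by
  classical
  have hb : a + d.val + 1 < n := by have := d.isLt; omega
  rw [stV]
  rw [GUP.testBit_ofBits]
  simp only [ha, decide_true, Bool.true_and, dif_pos hb]
  rw [decide_eq_true_eq]

lemma E_window_small (hn : 3 ≤ n) (hℓn : 2*n-2 ≤ ℓ) (hc1 : ∀ v : Vtx n, 1 ≤ cntV w v)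
    (i : Fin ℓ) {a b : Fin n} (hab : a.val < b.val) (hsmall : b.val - a.val ≤ n - 2)
    (hstep : ∀ i, GUP.hdV (w i) = GUP.tlV (w (i+1))) :
    (EAdj w (wpos i a) (wpos i b) ↔
      ((w i ⟨b.val - a.val - 1, by omega⟩).val).testBit a.val = true) := by
  have hb := b.isLt
  rw [wpos_pair i hab, eadj_iff w hn hℓn hc1 _ _ (by omega) (by omega),
    lab_small w _ _ ⟨by omega, hsmall⟩]
  have hbit := bitprop w hstep a.val i ⟨b.val - a.val - 1, by omega⟩ (by simp; omega)
  rw [show (i + ((a.val : ℕ) : Fin ℓ)) = wpos i a from (wpos_eq i a).symm] at hbit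
  rw [← hbit]
  constructor
  · intro h
    exact (Option.some_inj.mp h)
  · intro h
    rw [h]

lemma D_window_small (hn : 3 ≤ n) (hℓn : 2*n-2 ≤ ℓ) (hc1 : ∀ v : Vtx n, 1 ≤ cntV w v)
    (i : Fin ℓ) {a b : Fin n} (hab : a.val < b.val) (hsmall : b.val - a.val ≤ n - 2) :
    ¬ DAdj w (wpos i a) (wpos i b) := by
  have hb := b.isLt
  rw [wpos_pair i hab, dadj_iff w hn hℓn hc1 _ _ (by omega) (by omega),
    lab_small w _ _ ⟨by omega, hsmall⟩]
  simp

lemma E_window_last (hn : 3 ≤ n) (hℓn : 2*n-2 ≤ ℓ) (hc1 : ∀ v : Vtx n, 1 ≤ cntV w v)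
    (i : Fin ℓ) {a b : Fin n} (hab : a.val < b.val) (hlast : b.val - a.val = n - 1) :
    (EAdj w (wpos i a) (wpos i b) ↔ labN w i = some true) := by
  have hb := b.isLt
  have ha0 : a.val = 0 := by omega
  rw [wpos_pair i hab, eadj_iff w hn hℓn hc1 _ _ (by omega) (by omega), hlast,
    lab_last w, wpos_zero i ha0]

lemma D_window_last (hn : 3 ≤ n) (hℓn : 2*n-2 ≤ ℓ) (hc1 : ∀ v : Vtx n, 1 ≤ cntV w v)
    (i : Fin ℓ) {a b : Fin n} (hab : a.val < b.val) (hlast : b.val - a.val = n - 1) :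
    (DAdj w (wpos i a) (wpos i b) ↔ labN w i = none) := by
  have hb := b.isLt
  have ha0 : a.val = 0 := by omega
  rw [wpos_pair i hab, dadj_iff w hn hℓn hc1 _ _ (by omega) (by omega), hlast,
    lab_last w, wpos_zero i ha0]

lemma occ1 {v : Vtx n} (h1 : cntV w v = 1) : ∃ j, w j = v ∧ ∀ j', w j' = v → j' = j := by
  rw [cntV, Finset.card_eq_one] at h1
  obtain ⟨j, hj⟩ := h1
  have hjm : j ∈ univ.filter (fun i => w i = v) := by rw [hj]; exact Finset.mem_singleton_self j
  refine ⟨j, (Finset.mem_filter.mp hjm).2, fun j' hj' => ?_⟩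
  have : j' ∈ univ.filter (fun i => w i = v) := Finset.mem_filter.mpr ⟨mem_univ _, hj'⟩
  rw [hj] at this
  exact Finset.mem_singleton.mp this

lemma occ2 {v : Vtx n} (h2 : cntV w v = 2) : ∃ j₁ j₂ : Fin ℓ, j₁ < j₂ ∧ w j₁ = v ∧ w j₂ = v ∧
    (∀ j, w j = v → j = j₁ ∨ j = j₂) := by
  rw [cntV, Finset.card_eq_two] at h2
  obtain ⟨x, y, hxy, hset⟩ := h2
  have hx : w x = v := by
    have : x ∈ univ.filter (fun i => w i = v) := by rw [hset]; simp
    exact (Finset.mem_filter.mp this).2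
  have hy : w y = v := by
    have : y ∈ univ.filter (fun i => w i = v) := by rw [hset]; simp
    exact (Finset.mem_filter.mp this).2
  have huniq : ∀ j, w j = v → j = x ∨ j = y := by
    intro j hj
    have : j ∈ univ.filter (fun i => w i = v) := Finset.mem_filter.mpr ⟨mem_univ _, hj⟩
    rw [hset] at this
    simpa using this
  rcases lt_or_gt_of_ne hxy with h | h
  · exact ⟨x, y, h, hx, hy, huniq⟩
  · exact ⟨y, x, h, hy, hx, fun j hj => (huniq j hj).symm⟩

lemma isSnd_false {v : Vtx n} {j₁ j₂ : Fin ℓ} (hlt : j₁ < j₂) (hw1 : w j₁ = v)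
    (huniq : ∀ j, w j = v → j = j₁ ∨ j = j₂) : isSnd w j₁ = false := by
  rw [isSnd, decide_eq_false_iff_not]
  rintro ⟨j', hj'lt, hj'⟩
  rcases huniq j' (hj'.trans hw1) with rfl | rfl
  · exact absurd hj'lt (lt_irrefl _)
  · exact absurd (hj'lt.trans hlt) (lt_irrefl _)

lemma isSnd_true {v : Vtx n} {j₁ j₂ : Fin ℓ} (hlt : j₁ < j₂) (hw1 : w j₁ = v)
    (hw2 : w j₂ = v) : isSnd w j₂ = true := by
  rw [isSnd, decide_eq_true_eq]
  exact ⟨j₁, hlt, by rw [hw1, hw2]⟩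

lemma resolves_of_lt (E : SimpleGraph (Fin ℓ)) (i : Fin ℓ) (S : Set (Sym2 (Fin ℓ)))
    (H : SimpleGraph (Fin n))
    (hmain : ∀ a b : Fin n, a.val < b.val →
      (H.Adj a b ↔ (E.Adj (wpos i a) (wpos i b) ∨ s(wpos i a, wpos i b) ∈ S)))
    (hdiag : ∀ a : Fin n, s(wpos i a, wpos i a) ∉ S) :
    Resolves n E i S H := by
  intro a b
  rcases lt_trichotomy a.val b.val with h | h | h
  · exact hmain a b h
  · have hab : a = b := Fin.ext h
    subst hab
    exact iff_of_false (H.loopless.irrefl a) (by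
      rintro (hE | hS)
      · exact E.loopless.irrefl _ hE
      · exact hdiag a hS)
  · have hiff := hmain b a h
    rw [H.adj_comm, E.adj_comm, Sym2.eq_swap] at hiff
    exact hiff

lemma E_window_col (hn : 3 ≤ n) (hℓn : 2*n-2 ≤ ℓ) (hc1 : ∀ v : Vtx n, 1 ≤ cntV w v)
    (hstep : ∀ i, GUP.hdV (w i) = GUP.tlV (w (i+1)))
    (i : Fin ℓ) (d : Fin (n-2)) (a b : Fin n) (hb : b.val = a.val + d.val + 1)
    (ha : a.val < n-1-d.val) :
    (EAdj w (wpos i a) (wpos i b) ↔ ((w i d).val).testBit a.val = true) := by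
  have hd := d.isLt
  have hab : a.val < b.val := by omega
  have hsm : b.val - a.val ≤ n-2 := by omega
  have hE := E_window_small w hn hℓn hc1 i hab hsm hstep
  have hcol : (⟨b.val - a.val - 1, by omega⟩ : Fin (n-2)) = d := by
    apply Fin.ext
    simp only [Fin.val_mk]
    omega
  rw [hcol] at hE
  exact hE

lemma stV_bit' (H : SimpleGraph (Fin n)) (d : Fin (n-2)) (a b : Fin n)
    (hb : b.val = a.val + d.val + 1) (ha : a.val < n-1-d.val) :
    ((stV H d).val).testBit a.val = true ↔ H.Adj a b := by
  have hd := d.isLt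
  have h0 := stV_bit H d a.val ha
  generalize_proofs h1 h2 at h0
  have hA : (⟨a.val, h1⟩ : Fin n) = a := Fin.ext rfl
  have hB : (⟨a.val + d.val + 1, h2⟩ : Fin n) = b := Fin.ext (by simp only [Fin.val_mk]; omega)
  rw [hA, hB] at h0
  exact h0

theorem cond3 (hn : 3 ≤ n) (hℓn : 2*n-2 ≤ ℓ)
    (hstep : ∀ i, GUP.hdV (w i) = GUP.tlV (w (i+1)))
    (hc1 : ∀ v : Vtx n, 1 ≤ cntV w v) (hc2 : ∀ v : Vtx n, cntV w v ≤ 2)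
    (H : SimpleGraph (Fin n)) :
    ∃! p : Fin ℓ × Set (Sym2 (Fin ℓ)),
      ValidS n (Dg w) p.1 p.2 ∧ Resolves n (Eg w) p.1 p.2 H := by
  classical
  have hnℓ : n ≤ ℓ := by omega
  set a0 : Fin n := ⟨0, by omega⟩ with ha0def
  set aL : Fin n := ⟨n-1, by omega⟩ with haLdef
  have hab0L : a0.val < aL.val := by show (0:ℕ) < n-1; omega
  have hlast0L : aL.val - a0.val = n-1 := by show n-1-0 = n-1; omega
  have ha0L_ne : a0 ≠ aL := by
    intro h
    have h2 := congrArg Fin.val h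
    simp only [ha0def, haLdef] at h2
    omega
  -- shape of valid S sets
  have hSkey : ∀ (i : Fin ℓ) (S : Set (Sym2 (Fin ℓ))), ValidS n (Dg w) i S →
      ∀ e ∈ S, e = s(wpos i a0, wpos i aL) ∧ labN w i = none := by
    intro i S hval e he
    obtain ⟨a, b, hepair, hD⟩ := hval e he
    rw [Dg_adj] at hD
    have key : ∀ (a b : Fin n), a.val < b.val → DAdj w (wpos i a) (wpos i b) →
        a = a0 ∧ b = aL ∧ labN w i = none := by
      intro a b hab hD'
      by_cases hsm : b.val - a.val ≤ n-2
      · exact absurd hD' (D_window_small w hn hℓn hc1 i hab hsm)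
      · have hbb := b.isLt
        have hlastab : b.val - a.val = n-1 := by omega
        refine ⟨Fin.ext (show a.val = (0:ℕ) by omega),
          Fin.ext (show b.val = n-1 by omega),
          (D_window_last w hn hℓn hc1 i hab hlastab).mp hD'⟩
    rcases lt_trichotomy a.val b.val with h | h | h
    · obtain ⟨h1, h2, h3⟩ := key a b h hD
      subst h1; subst h2
      exact ⟨hepair, h3⟩
    · have hab : a = b := Fin.ext h
      subst hab
      exact absurd rfl hD.1
    · have hDsymm : DAdj w (wpos i b) (wpos i a) := (Dg w).symm.symm _ _ hD
      obtain ⟨h1, h2, h3⟩ := key b a h hDsymm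
      subst h1; subst h2
      rw [Sym2.eq_swap] at hepair
      exact ⟨hepair, h3⟩
  -- a window pair of distance ≤ n-2 is never the long diagonal
  have hpairfalse : ∀ (i : Fin ℓ) {a b : Fin n}, a.val < b.val → b.val - a.val ≤ n-2 →
      s(wpos i a, wpos i b) ≠ s(wpos i a0, wpos i aL) := by
    intro i a b hab hsm hcon
    rw [Sym2.eq_iff] at hcon
    rcases hcon with ⟨h1, h2⟩ | ⟨h1, h2⟩
    · have e1 := wpos_inj hnℓ i h1
      have e2 := wpos_inj hnℓ i h2
      subst e1; subst e2
      revert hab hsm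
      simp only [ha0def, haLdef, Fin.val_mk]
      omega
    · have e1 := wpos_inj hnℓ i h1
      have e2 := wpos_inj hnℓ i h2
      subst e1; subst e2
      revert hab
      simp only [ha0def, haLdef, Fin.val_mk]
      omega
  -- diagonal pairs are never in a valid S
  have hdiagS : ∀ (i : Fin ℓ) (S : Set (Sym2 (Fin ℓ))), ValidS n (Dg w) i S →
      ∀ a : Fin n, s(wpos i a, wpos i a) ∉ S := by
    intro i S hval a hmem
    have h1 := (hSkey i S hval _ hmem).1
    rw [Sym2.eq_iff] at h1
    have h0L : wpos i a0 = wpos i aL := by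
      rcases h1 with ⟨u1, u2⟩ | ⟨u1, u2⟩
      · rw [← u1, ← u2]
      · rw [← u1, ← u2]
    exact ha0L_ne (wpos_inj hnℓ i h0L)
  -- the pair (i,S) determines the state w i
  have hWieq : ∀ (i : Fin ℓ) (S : Set (Sym2 (Fin ℓ))), ValidS n (Dg w) i S →
      Resolves n (Eg w) i S H → w i = stV H := by
    intro i S hval hres
    funext d
    apply Fin.ext
    apply GUP.eq_of_testBit_lt (w i d).isLt ((stV H) d).isLt
    intro a ha
    have hd := d.isLt
    set A : Fin n := ⟨a, by omega⟩ with hAdef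
    set B : Fin n := ⟨a + d.val + 1, by omega⟩ with hBdef
    have hBval : B.val = A.val + d.val + 1 := rfl
    have haval : A.val < n-1-d.val := ha
    have hE := E_window_col w hn hℓn hc1 hstep i d A B hBval haval
    have hres' := hres A B
    have hnotS : s(wpos i A, wpos i B) ∉ S := by
      intro hmem
      exact hpairfalse i (show A.val < B.val by rw [hBval]; omega)
        (show B.val - A.val ≤ n-2 by rw [hBval]; omega)
        (hSkey i S hval _ hmem).1
    have hEH : H.Adj A B ↔ ((w i d).val).testBit A.val = true := by
      constructor
      · intro h
        rcases hres'.mp h with hE' | hS'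
        · exact hE.mp hE'
        · exact absurd hS' hnotS
      · intro h
        exact hres'.mpr (Or.inl (hE.mpr h))
    have hst := stV_bit' H d A B hBval haval
    have hiff : ((w i d).val).testBit A.val = true ↔ ((stV H d).val).testBit A.val = true :=
      hEH.symm.trans hst.symm
    show ((w i d).val).testBit A.val = ((stV H d).val).testBit A.val
    cases hwb : ((w i d).val).testBit A.val <;> cases hsb : ((stV H d).val).testBit A.val <;>
      simp_all
  -- translation between H and E on small window pairs, for a position carrying the state
  have hHsmall : ∀ (i₀ : Fin ℓ), w i₀ = stV H → ∀ {a b : Fin n}, a.val < b.val →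
      b.val - a.val ≤ n-2 → (H.Adj a b ↔ EAdj w (wpos i₀ a) (wpos i₀ b)) := by
    intro i₀ hw0 a b hab hsm
    have hbb := b.isLt
    set d : Fin (n-2) := ⟨b.val - a.val - 1, by omega⟩ with hddef
    have hBval : b.val = a.val + d.val + 1 := by
      rw [hddef]; simp only [Fin.val_mk]; omega
    have haval : a.val < n-1-d.val := by
      rw [hddef]; simp only [Fin.val_mk]; omega
    have hE := E_window_col w hn hℓn hc1 hstep i₀ d a b hBval haval
    have hst := stV_bit' H d a b hBval haval
    rw [hE, ← hst, hw0]
  -- translation on the long diagonal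
  have hHlast : ∀ (i₀ : Fin ℓ),
      (EAdj w (wpos i₀ a0) (wpos i₀ aL) ↔ labN w i₀ = some true) :=
    fun i₀ => E_window_last w hn hℓn hc1 i₀ hab0L hlast0L
  have hDlast : ∀ (i₀ : Fin ℓ),
      (DAdj w (wpos i₀ a0) (wpos i₀ aL) ↔ labN w i₀ = none) :=
    fun i₀ => D_window_last w hn hℓn hc1 i₀ hab0L hlast0L
  -- case analysis on the number of occurrences of the state of H
  have hcv1 := hc1 (stV H)
  have hcv2 := hc2 (stV H)
  by_cases hone : cntV w (stV H) = 1
  · -- unique occurrence: the window has a diamond on the long diagonal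
    obtain ⟨i₀, hi₀, hun⟩ := occ1 w hone
    have hlabN0 : labN w i₀ = none := by
      rw [labN, hi₀, if_neg (by omega)]
    refine ⟨(i₀, {e | e = s(wpos i₀ a0, wpos i₀ aL) ∧ H.Adj a0 aL}), ⟨?_, ?_⟩, ?_⟩
    · rintro e ⟨he1, he2⟩
      exact ⟨a0, aL, he1, (hDlast i₀).mpr hlabN0⟩
    · apply resolves_of_lt
      · intro a b hab
        by_cases hsm : b.val - a.val ≤ n-2
        · have hnm : s(wpos i₀ a, wpos i₀ b) ∉
              {e | e = s(wpos i₀ a0, wpos i₀ aL) ∧ H.Adj a0 aL} := by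
            rintro ⟨he1, -⟩
            exact hpairfalse i₀ hab hsm he1
          have hH := hHsmall i₀ hi₀ hab hsm
          constructor
          · intro h
            exact Or.inl (hH.mp h)
          · rintro (h | h)
            · exact hH.mpr h
            · exact absurd h hnm
        · have hbb := b.isLt
          have ha' : a = a0 := Fin.ext (show a.val = (0:ℕ) by omega)
          have hb' : b = aL := Fin.ext (show b.val = n-1 by omega)
          subst ha'; subst hb'
          constructor
          · intro h
            exact Or.inr ⟨rfl, h⟩
          · rintro (h | ⟨-, h⟩)
            · rw [Eg_adj] at h
              have := (hHlast i₀).mp h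
              rw [hlabN0] at this
              exact absurd this (by simp)
            · exact h
      · intro a hmem
        obtain ⟨he1, -⟩ := hmem
        rw [Sym2.eq_iff] at he1
        have h0L : wpos i₀ a0 = wpos i₀ aL := by
          rcases he1 with ⟨u1, u2⟩ | ⟨u1, u2⟩
          · rw [← u1, ← u2]
          · rw [← u1, ← u2]
        exact ha0L_ne (wpos_inj hnℓ i₀ h0L)
    · rintro ⟨i, S⟩ ⟨hval, hres⟩
      have hwi : w i = stV H := hWieq i S hval hres
      have hii : i = i₀ := hun i hwi
      subst hii
      have hSeq : S = {e | e = s(wpos i a0, wpos i aL) ∧ H.Adj a0 aL} := by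
        ext e
        constructor
        · intro he
          obtain ⟨he1, -⟩ := hSkey i S hval e he
          refine ⟨he1, ?_⟩
          exact (hres a0 aL).mpr (Or.inr (by rw [← he1]; exact he))
        · rintro ⟨he1, hadj⟩
          rcases (hres a0 aL).mp hadj with hE | hS
          · rw [Eg_adj] at hE
            have h2 := (hHlast i).mp hE
            have h3 : labN w i = none := by
              rw [labN, hwi, if_neg (by omega)]
            rw [h3] at h2
            exact absurd h2 (by simp)
          · rw [he1]; exact hS
      rw [Prod.ext_iff]
      exact ⟨rfl, hSeq⟩
  · -- the state occurs twice: the window has an edge or non-edge on the long diagonal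
    have htwo : cntV w (stV H) = 2 := by omega
    obtain ⟨j₁, j₂, hlt, hw1, hw2, huq⟩ := occ2 w htwo
    have hsnd1 := isSnd_false w hlt hw1 huq
    have hsnd2 := isSnd_true w hlt hw1 hw2
    have hlab1 : labN w j₁ = some false := by
      rw [labN, hw1, if_pos htwo]
      rw [show isSnd w j₁ = false from hsnd1]
    have hlab2 : labN w j₂ = some true := by
      rw [labN, hw2, if_pos htwo]
      rw [show isSnd w j₂ = true from hsnd2]
    set i₀ : Fin ℓ := if H.Adj a0 aL then j₂ else j₁ with hi₀def
    have hw0 : w i₀ = stV H := by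
      by_cases hH : H.Adj a0 aL <;> simp [hi₀def, hH, hw1, hw2]
    have hlabiff : labN w i₀ = some true ↔ H.Adj a0 aL := by
      by_cases hH : H.Adj a0 aL <;> simp [hi₀def, hH, hlab1, hlab2]
    refine ⟨(i₀, (∅ : Set (Sym2 (Fin ℓ)))), ⟨?_, ?_⟩, ?_⟩
    · rintro e he
      exact absurd he (Set.notMem_empty e)
    · apply resolves_of_lt
      · intro a b hab
        by_cases hsm : b.val - a.val ≤ n-2
        · have hH := hHsmall i₀ hw0 hab hsm
          constructor
          · intro h
            exact Or.inl (hH.mp h)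
          · rintro (h | h)
            · exact hH.mpr h
            · exact absurd h (Set.notMem_empty _)
        · have hbb := b.isLt
          have ha' : a = a0 := Fin.ext (show a.val = (0:ℕ) by omega)
          have hb' : b = aL := Fin.ext (show b.val = n-1 by omega)
          subst ha'; subst hb'
          constructor
          · intro h
            exact Or.inl ((hHlast i₀).mpr (hlabiff.mpr h))
          · rintro (h | h)
            · exact hlabiff.mp ((hHlast i₀).mp h)
            · exact absurd h (Set.notMem_empty _)
      · intro a hmem
        exact absurd hmem (Set.notMem_empty _)
    · rintro ⟨i, S⟩ ⟨hval, hres⟩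
      have hwi : w i = stV H := hWieq i S hval hres
      have hSempty : S = ∅ := by
        ext e
        simp only [Set.mem_empty_iff_false, iff_false]
        intro he
        have h2' := (hSkey i S hval e he).2
        rw [labN, hwi, if_pos htwo] at h2'
        exact absurd h2' (by simp)
      have hImem : i = i₀ := by
        rcases huq i hwi with rfl | rfl
        · -- i = j₁ : the long diagonal is a non-edge, so H.Adj a0 aL fails
          have hnadj : ¬ H.Adj a0 aL := by
            intro hadj
            rcases (hres a0 aL).mp hadj with hE | hS
            · rw [Eg_adj] at hE
              have h2 := (hHlast i).mp hE
              rw [hlab1] at h2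
              exact absurd h2 (by simp)
            · rw [hSempty] at hS
              exact absurd hS (Set.notMem_empty _)
          rw [hi₀def, if_neg hnadj]
        · -- i = j₂ : the long diagonal is an edge, so H.Adj a0 aL holds
          have hadj : H.Adj a0 aL :=
            (hres a0 aL).mpr (Or.inl ((hHlast i).mpr hlab2))
          rw [hi₀def, if_pos hadj]
      rw [Prod.ext_iff]
      exact ⟨hImem, hSempty⟩

theorem build (hn : 3 ≤ n) (hℓn : 2*n-2 ≤ ℓ)
    (hstep : ∀ i, GUP.hdV (w i) = GUP.tlV (w (i+1)))
    (hc1 : ∀ v : Vtx n, 1 ≤ cntV w v) (hc2 : ∀ v : Vtx n, cntV w v ≤ 2) :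
    ∃ E D : SimpleGraph (Fin ℓ), IsGupcycle n ℓ E D :=
  ⟨Eg w, Dg w, cond1 w hn hℓn hc1, cond2 w hℓn,
    fun H => cond3 w hn hℓn hstep hc1 hc2 H⟩

end Main

/-- for every `n ≥ 3` and every `ℓ` in the two stated ranges, there is a
gupcycle of length `ℓ` for the labeled graphs on `{1,…,n}`. -/
theorem gupcycle_lengths_labeled (n ℓ : ℕ) (hn : 3 ≤ n)
    (hℓ : (2 ^ (n.choose 2 - 1) ≤ ℓ ∧ ℓ ≤ 2 ^ (n.choose 2 - 1) + 2 ^ (2 * n - 4)) ∨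
          (2 ^ (n.choose 2) - 2 ^ (2 * n - 4) ≤ ℓ ∧ ℓ ≤ 2 ^ (n.choose 2))) :
    ∃ E D : SimpleGraph (Fin ℓ), IsGupcycle n ℓ E D := by
  have hch : ∀ p : ℕ, (p+3).choose 2 = (p*p + 5*p + 6)/2 := by
    intro p
    rw [Nat.choose_two_right]
    congr 1
    have h31 : p + 3 - 1 = p + 2 := by omega
    rw [h31]
    ring
  have hexp : 2*n - 4 ≤ n.choose 2 - 1 := by
    obtain ⟨p, rfl⟩ : ∃ p, n = p + 3 := ⟨n - 3, by omega⟩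
    rw [hch p]
    omega
  have hpow24 : (2:ℕ)^(2*n-4) ≤ 2^(n.choose 2 - 1) := Nat.pow_le_pow_right (by norm_num) hexp
  have hC1 : 1 ≤ n.choose 2 := by
    obtain ⟨p, rfl⟩ : ∃ p, n = p + 3 := ⟨n - 3, by omega⟩
    rw [hch p]
    omega
  have hpow2 : (2:ℕ)^(n.choose 2) = 2 * 2^(n.choose 2 - 1) := by
    conv_lhs => rw [show n.choose 2 = (n.choose 2 - 1) + 1 by omega]
    rw [pow_succ, mul_comm]
  have htp := two_pow_bounds (n := n) hn
  have hppos : (0:ℕ) < 2^(n.choose 2 - 1) := Nat.two_pow_pos _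
  have hpos : 0 < ℓ := by
    rcases hℓ with ⟨h1, h2⟩ | ⟨h1, h2⟩ <;> omega
  haveI : NeZero ℓ := ⟨by omega⟩
  have hℓn : 2*n-2 ≤ ℓ := by
    rcases hℓ with ⟨h1, h2⟩ | ⟨h1, h2⟩ <;> omega
  obtain ⟨w, hstep, hcnt⟩ := GUP.exists_walk (n := n) hn ℓ (by
    rcases hℓ with ⟨h1, h2⟩ | ⟨h1, h2⟩
    · exact Or.inl ⟨ℓ - 2^(n.choose 2 - 1), by omega, by omega⟩
    · exact Or.inr ⟨2^(n.choose 2) - ℓ, by omega, by omega⟩)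
  exact build w hn hℓn hstep (fun v => (hcnt v).1) (fun v => (hcnt v).2)

end Stmt2
end

section
/- For every n ≥ 3, the number of unordered pairs {H,K} of distinct simple graphs on vertex set {1,…,n−1} such that for all 1 ≤ i < j ≤ n−2 both of the following hold — (vertices i+1 and j+1 are adjacent in H if and only if vertices i and j are adjacent in K) and (vertices i+1 and j+1 are adjacent in K if and only if vertices i and j are adjacent in H) — is exactly 2^(2n−5) − 2^(n−3). (Equivalently, the fully compressed arc digraph for labeled graphs on {1,…,n} contains exactly 2^(2n−5) − 2^(n−3) tours of length 2.) -/
def gRaw (m : ℕ) (a b : ℕ → Bool) : SimpleGraph (Fin m) where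
  Adj x y := x ≠ y ∧ (if min x.val y.val % 2 = 0 then a else b)
      (max x.val y.val - min x.val y.val - 1) = true
  symm := by
    constructor
    intro x y ⟨h1, h2⟩
    refine ⟨fun h => h1 h.symm, ?_⟩
    rwa [min_comm y.val x.val, max_comm y.val x.val]
  loopless := by constructor; intro x ⟨h, _⟩; exact h rfl

lemma gRaw_adj (m : ℕ) (a b : ℕ → Bool) (i j : ℕ) (hij : i < j) (hj : j < m) :
    (gRaw m a b).Adj ⟨i, by omega⟩ ⟨j, by omega⟩ ↔
      (if i % 2 = 0 then a else b) (j - i - 1) = true := by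
  show (_ ∧ _) ↔ _
  rw [and_iff_right]
  · have h1 : min i j = i := by omega
    have h2 : max i j = j := by omega
    rw [h1, h2]
  · simp [Fin.mk_eq_mk]; omega

def Cond (n : ℕ) (hn : 3 ≤ n) (H K : SimpleGraph (Fin (n-1))) : Prop :=
  ∀ i j : ℕ, ∀ _hij : i < j, ∀ _hj : j < n - 2,
    ((H.Adj ⟨i + 1, by have := hn; omega⟩ ⟨j + 1, by have := hn; omega⟩ ↔
      K.Adj ⟨i, by have := hn; omega⟩ ⟨j, by have := hn; omega⟩) ∧
     (K.Adj ⟨i + 1, by have := hn; omega⟩ ⟨j + 1, by have := hn; omega⟩ ↔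
      H.Adj ⟨i, by have := hn; omega⟩ ⟨j, by have := hn; omega⟩))

lemma cond_gRaw (n : ℕ) (hn : 3 ≤ n) (a b : ℕ → Bool) :
    Cond n hn (gRaw (n-1) a b) (gRaw (n-1) b a) := by
  intro i j hij hj
  rw [gRaw_adj (n-1) a b (i+1) (j+1) (by omega) (by omega),
      gRaw_adj (n-1) a b i j (by omega) (by omega),
      gRaw_adj (n-1) b a (i+1) (j+1) (by omega) (by omega),
      gRaw_adj (n-1) b a i j (by omega) (by omega)]
  have he : j + 1 - (i + 1) - 1 = j - i - 1 := by omega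
  rw [he]
  rcases Nat.mod_two_eq_zero_or_one i with h | h
  · have h' : (i + 1) % 2 = 1 := by omega
    simp [h, h']
  · have h' : (i + 1) % 2 = 0 := by omega
    simp [h, h']


lemma chain (n : ℕ) (hn : 3 ≤ n) (H K : SimpleGraph (Fin (n-1)))
    (hc : Cond n hn H K) :
    ∀ i j : ℕ, ∀ _hij : i < j, ∀ _hj : j ≤ n - 2,
    ((H.Adj ⟨i, by omega⟩ ⟨j, by omega⟩ ↔
       (if i % 2 = 0 then H.Adj ⟨0, by omega⟩ ⟨j - i, by omega⟩
        else K.Adj ⟨0, by omega⟩ ⟨j - i, by omega⟩)) ∧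
     (K.Adj ⟨i, by omega⟩ ⟨j, by omega⟩ ↔
       (if i % 2 = 0 then K.Adj ⟨0, by omega⟩ ⟨j - i, by omega⟩
        else H.Adj ⟨0, by omega⟩ ⟨j - i, by omega⟩))) := by
  intro i
  induction i with
  | zero =>
    intro j hij hj
    simp only [Nat.zero_mod, if_pos rfl, Nat.sub_zero]
    exact ⟨Iff.rfl, Iff.rfl⟩
  | succ i ih =>
    intro j hij hj
    have hcc := hc i (j - 1) (by omega) (by omega)
    have hih := ih (j - 1) (by omega) (by omega)
    have e2 : (⟨j - 1 + 1, by omega⟩ : Fin (n-1)) = ⟨j, by omega⟩ := by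
      simp only [Fin.mk_eq_mk]; omega
    have e4 : (⟨j - 1 - i, by omega⟩ : Fin (n-1)) = ⟨j - (i + 1), by omega⟩ := by
      simp only [Fin.mk_eq_mk]; omega
    have hcc1 : H.Adj ⟨i + 1, by omega⟩ ⟨j, by omega⟩ ↔
        K.Adj ⟨i, by omega⟩ ⟨j - 1, by omega⟩ :=
      (iff_of_eq (congrArg (H.Adj ⟨i + 1, by omega⟩) e2)).symm.trans hcc.1
    have hcc2 : K.Adj ⟨i + 1, by omega⟩ ⟨j, by omega⟩ ↔
        H.Adj ⟨i, by omega⟩ ⟨j - 1, by omega⟩ :=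
      (iff_of_eq (congrArg (K.Adj ⟨i + 1, by omega⟩) e2)).symm.trans hcc.2
    have eH : H.Adj ⟨0, by omega⟩ ⟨j - 1 - i, by omega⟩ ↔
        H.Adj ⟨0, by omega⟩ ⟨j - (i + 1), by omega⟩ :=
      iff_of_eq (congrArg (H.Adj ⟨0, by omega⟩) e4)
    have eK : K.Adj ⟨0, by omega⟩ ⟨j - 1 - i, by omega⟩ ↔
        K.Adj ⟨0, by omega⟩ ⟨j - (i + 1), by omega⟩ :=
      iff_of_eq (congrArg (K.Adj ⟨0, by omega⟩) e4)
    rcases Nat.mod_two_eq_zero_or_one i with h | h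
    · have h' : (i + 1) % 2 = 1 := by omega
      simp only [h, if_pos rfl] at hih
      simp only [h', Nat.one_ne_zero, if_false]
      exact ⟨hcc1.trans (hih.2.trans eK), hcc2.trans (hih.1.trans eH)⟩
    · have h' : (i + 1) % 2 = 0 := by omega
      simp only [h, Nat.one_ne_zero, if_false] at hih
      simp only [h', if_pos rfl]
      exact ⟨hcc1.trans (hih.2.trans eH), hcc2.trans (hih.1.trans eK)⟩

def extF (n : ℕ) (f : Fin (n-2) → Bool) : ℕ → Bool :=
  fun d => if h : d < n - 2 then f ⟨d, h⟩ else false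

lemma row0 (n : ℕ) (hn : 3 ≤ n) (a b : Fin (n-2) → Bool) (t : Fin (n-2)) :
    (gRaw (n-1) (extF n a) (extF n b)).Adj ⟨0, by omega⟩
      ⟨t.val + 1, by have := t.isLt; omega⟩ ↔ a t = true := by
  have ht := t.isLt
  rw [gRaw_adj (n-1) _ _ 0 (t.val+1) (by omega) (by omega)]
  simp only [Nat.zero_mod, if_pos rfl]
  have e : t.val + 1 - 0 - 1 = t.val := by omega
  rw [e]
  simp [extF, ht]

open Classical in
noncomputable def rowF (n : ℕ) (hn : 3 ≤ n) (H : SimpleGraph (Fin (n-1))) :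
    Fin (n-2) → Bool :=
  fun t => decide (H.Adj ⟨0, by omega⟩ ⟨t.val + 1, by have := t.isLt; omega⟩)

lemma extF_rowF (n : ℕ) (hn : 3 ≤ n) (H : SimpleGraph (Fin (n-1))) (d : ℕ)
    (hd : d < n - 2) :
    extF n (rowF n hn H) d = true ↔ H.Adj ⟨0, by omega⟩ ⟨d + 1, by omega⟩ := by
  unfold extF rowF
  rw [dif_pos hd]
  exact @decide_eq_true_iff _ (Classical.propDecidable _)

lemma exists_rep (n : ℕ) (hn : 3 ≤ n) (H K : SimpleGraph (Fin (n-1)))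
    (hc : Cond n hn H K) :
    H = gRaw (n-1) (extF n (rowF n hn H)) (extF n (rowF n hn K)) ∧
    K = gRaw (n-1) (extF n (rowF n hn K)) (extF n (rowF n hn H)) := by
  set a := rowF n hn H with ha
  set b := rowF n hn K with hb
  have key : ∀ x y : Fin (n-1), x.val < y.val →
      (H.Adj x y ↔ (gRaw (n-1) (extF n a) (extF n b)).Adj x y) ∧
      (K.Adj x y ↔ (gRaw (n-1) (extF n b) (extF n a)).Adj x y) := by
    intro x y hxy
    have hy := y.isLt
    have hch := chain n hn H K hc x.val y.val hxy (by omega)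
    have hg1 := gRaw_adj (n-1) (extF n a) (extF n b) x.val y.val hxy y.isLt
    have hg2 := gRaw_adj (n-1) (extF n b) (extF n a) x.val y.val hxy y.isLt
    have hd : y.val - x.val - 1 < n - 2 := by omega
    have e4 : (⟨y.val - x.val - 1 + 1, by omega⟩ : Fin (n-1)) =
        ⟨y.val - x.val, by omega⟩ := by
      simp only [Fin.mk_eq_mk]; omega
    have hvA : extF n a (y.val - x.val - 1) = true ↔
        H.Adj ⟨0, by omega⟩ ⟨y.val - x.val, by omega⟩ :=
      (extF_rowF n hn H _ hd).trans
        (iff_of_eq (congrArg (H.Adj ⟨0, by omega⟩) e4))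
    have hvB : extF n b (y.val - x.val - 1) = true ↔
        K.Adj ⟨0, by omega⟩ ⟨y.val - x.val, by omega⟩ :=
      (extF_rowF n hn K _ hd).trans
        (iff_of_eq (congrArg (K.Adj ⟨0, by omega⟩) e4))
    rcases Nat.mod_two_eq_zero_or_one x.val with h | h
    · rw [if_pos h] at hg1 hg2
      simp only [h, if_pos rfl] at hch
      exact ⟨hch.1.trans (hvA.symm.trans hg1.symm),
             hch.2.trans (hvB.symm.trans hg2.symm)⟩
    · rw [if_neg (by omega : ¬ x.val % 2 = 0)] at hg1 hg2
      simp only [h, Nat.one_ne_zero, if_false] at hch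
      exact ⟨hch.1.trans (hvB.symm.trans hg1.symm),
             hch.2.trans (hvA.symm.trans hg2.symm)⟩
  constructor
  · ext x y
    rcases lt_trichotomy x.val y.val with h | h | h
    · exact (key x y h).1
    · have : x = y := Fin.ext h
      subst this
      simp
    · exact (H.adj_comm x y).trans (((key y x h).1).trans
        ((gRaw (n-1) (extF n a) (extF n b)).adj_comm y x))
  · ext x y
    rcases lt_trichotomy x.val y.val with h | h | h
    · exact (key x y h).2
    · have : x = y := Fin.ext h
      subst this
      simp
    · exact (K.adj_comm x y).trans (((key y x h).2).trans
        ((gRaw (n-1) (extF n b) (extF n a)).adj_comm y x))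

lemma hrow (n : ℕ) (hn : 3 ≤ n) (a b a' b' : Fin (n-2) → Bool)
    (h : gRaw (n-1) (extF n a) (extF n b) = gRaw (n-1) (extF n a') (extF n b')) :
    a = a' := by
  funext t
  have h1 := row0 n hn a b t
  have h2 := row0 n hn a' b' t
  rw [h] at h1
  rw [Bool.eq_iff_iff]
  exact h1.symm.trans h2

lemma cond_symm (n : ℕ) (hn : 3 ≤ n) (H K : SimpleGraph (Fin (n-1)))
    (hc : Cond n hn H K) : Cond n hn K H :=
  fun i j h1 h2 => ⟨(hc i j h1 h2).2, (hc i j h1 h2).1⟩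

/-- for `n ≥ 3`, there are exactly `2^(2n−5) − 2^(n−3)` unordered pairs
`{H,K}` of distinct simple graphs on `{1,…,n−1}` (0-indexed via `Fin (n-1)`) such that
the induced subgraph of `H` on the last `n−2` vertices is order-isomorphic to the
induced subgraph of `K` on the first `n−2` vertices, and vice versa; i.e. the fully
compressed arc digraph has exactly `2^(2n−5) − 2^(n−3)` tours of length `2`. -/
theorem compressed_arc_digraph_two_tour_count (n : ℕ) (hn : 3 ≤ n) :
    {P : Set (SimpleGraph (Fin (n - 1))) | ∃ H K : SimpleGraph (Fin (n - 1)),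
      H ≠ K ∧ P = {H, K} ∧
      ∀ i j : ℕ, ∀ _hij : i < j, ∀ _hj : j < n - 2,
        ((H.Adj ⟨i + 1, by omega⟩ ⟨j + 1, by omega⟩ ↔
          K.Adj ⟨i, by omega⟩ ⟨j, by omega⟩) ∧
         (K.Adj ⟨i + 1, by omega⟩ ⟨j + 1, by omega⟩ ↔
          H.Adj ⟨i, by omega⟩ ⟨j, by omega⟩))}.ncard
      = 2 ^ (2 * n - 5) - 2 ^ (n - 3) := by
  classical
  set r : SimpleGraph (Fin (n-1)) → SimpleGraph (Fin (n-1)) → Prop :=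
    WellOrderingRel with hr
  set Φ : ((Fin (n-2) → Bool) × (Fin (n-2) → Bool)) →
      SimpleGraph (Fin (n-1)) × SimpleGraph (Fin (n-1)) :=
    fun q => (gRaw (n-1) (extF n q.1) (extF n q.2),
              gRaw (n-1) (extF n q.2) (extF n q.1)) with hΦ
  have hΦinj : Function.Injective Φ := by
    intro q q' h
    exact Prod.ext (hrow n hn _ _ _ _ (congrArg Prod.fst h))
      (hrow n hn _ _ _ _ (congrArg Prod.snd h))
  set Sne : Set (SimpleGraph (Fin (n-1)) × SimpleGraph (Fin (n-1))) :=
    {p | Cond n hn p.1 p.2 ∧ p.1 ≠ p.2} with hSne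
  have hSneim : Sne = Φ '' {q | q.1 ≠ q.2} := by
    ext p
    constructor
    · rintro ⟨hc, hne⟩
      obtain ⟨h1, h2⟩ := exists_rep n hn p.1 p.2 hc
      refine ⟨(rowF n hn p.1, rowF n hn p.2), ?_, Prod.ext h1.symm h2.symm⟩
      intro hab
      replace hab : rowF n hn p.1 = rowF n hn p.2 := hab
      apply hne
      have hgg : gRaw (n-1) (extF n (rowF n hn p.1)) (extF n (rowF n hn p.2)) =
          gRaw (n-1) (extF n (rowF n hn p.2)) (extF n (rowF n hn p.1)) := by
        rw [hab]
      exact h1.trans (hgg.trans h2.symm)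
    · rintro ⟨q, hq, rfl⟩
      refine ⟨cond_gRaw n hn _ _, ?_⟩
      intro he
      exact hq (hrow n hn _ _ _ _ he)
  set S' : Set (SimpleGraph (Fin (n-1)) × SimpleGraph (Fin (n-1))) :=
    {p | Cond n hn p.1 p.2 ∧ r p.1 p.2} with hS'
  set S'' : Set (SimpleGraph (Fin (n-1)) × SimpleGraph (Fin (n-1))) :=
    {p | Cond n hn p.1 p.2 ∧ r p.2 p.1} with hS''
  have hunion : Sne = S' ∪ S'' := by
    ext p
    simp only [hSne, hS', hS'', Set.mem_setOf_eq, Set.mem_union]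
    constructor
    · rintro ⟨hc, hne⟩
      rcases trichotomous_of r p.1 p.2 with h | h | h
      · exact Or.inl ⟨hc, h⟩
      · exact absurd h hne
      · exact Or.inr ⟨hc, h⟩
    · rintro (⟨hc, h⟩ | ⟨hc, h⟩)
      · exact ⟨hc, fun he => irrefl_of r p.1 (he ▸ h)⟩
      · exact ⟨hc, fun he => irrefl_of r p.1 (he ▸ h)⟩
  have hdisj : Disjoint S' S'' := by
    rw [Set.disjoint_left]
    rintro p ⟨_, h1⟩ ⟨_, h2⟩
    exact irrefl_of r p.1 (trans_of r h1 h2)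
  have hswap : S'' = Prod.swap '' S' := by
    ext p
    simp only [hS', hS'', Set.mem_setOf_eq, Set.mem_image]
    constructor
    · rintro ⟨hc, h⟩
      exact ⟨(p.2, p.1), ⟨cond_symm n hn _ _ hc, h⟩, rfl⟩
    · rintro ⟨q, ⟨hc, h⟩, rfl⟩
      exact ⟨cond_symm n hn _ _ hc, h⟩
  have hD : {q : (Fin (n-2) → Bool) × (Fin (n-2) → Bool) | q.1 ≠ q.2} =
      ↑(Finset.univ.offDiag (α := Fin (n-2) → Bool)) := by
    ext q
    simp [Finset.mem_offDiag]
  have hcardfun : Fintype.card (Fin (n-2) → Bool) = 2 ^ (n-2) := by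
    simp [Fintype.card_fun]
  have hSnecard : Sne.ncard = 2 ^ (n-2) * 2 ^ (n-2) - 2 ^ (n-2) := by
    rw [hSneim, Set.ncard_image_of_injective _ hΦinj, hD, Set.ncard_coe_finset,
      Finset.offDiag_card, Finset.card_univ, hcardfun]
  have hS''card : S''.ncard = S'.ncard := by
    rw [hswap, Set.ncard_image_of_injective _ Prod.swap_injective]
  have h2S' : 2 * S'.ncard = 2 ^ (n-2) * 2 ^ (n-2) - 2 ^ (n-2) := by
    rw [← hSnecard, hunion, Set.ncard_union_eq hdisj (Set.toFinite _) (Set.toFinite _),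
      hS''card]
    ring
  have hT : {P : Set (SimpleGraph (Fin (n - 1))) | ∃ H K : SimpleGraph (Fin (n - 1)),
      H ≠ K ∧ P = {H, K} ∧
      ∀ i j : ℕ, ∀ _hij : i < j, ∀ _hj : j < n - 2,
        ((H.Adj ⟨i + 1, by omega⟩ ⟨j + 1, by omega⟩ ↔
          K.Adj ⟨i, by omega⟩ ⟨j, by omega⟩) ∧
         (K.Adj ⟨i + 1, by omega⟩ ⟨j + 1, by omega⟩ ↔
          H.Adj ⟨i, by omega⟩ ⟨j, by omega⟩))}
      = (fun p : SimpleGraph (Fin (n-1)) × SimpleGraph (Fin (n-1)) =>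
          ({p.1, p.2} : Set (SimpleGraph (Fin (n-1))))) '' S' := by
    ext P
    simp only [Set.mem_setOf_eq, Set.mem_image]
    constructor
    · rintro ⟨H, K, hne, hP, hcond⟩
      have hc : Cond n hn H K := hcond
      rcases trichotomous_of r H K with h | h | h
      · exact ⟨(H, K), ⟨hc, h⟩, hP.symm⟩
      · exact absurd h hne
      · refine ⟨(K, H), ⟨cond_symm n hn _ _ hc, h⟩, ?_⟩
        rw [hP]
        exact Set.pair_comm K H
    · rintro ⟨p, ⟨hc, hlt⟩, rfl⟩
      refine ⟨p.1, p.2, ?_, rfl, hc⟩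
      intro he
      exact irrefl_of r p.1 (he ▸ hlt)
  have hinjOn : Set.InjOn (fun p : SimpleGraph (Fin (n-1)) × SimpleGraph (Fin (n-1)) =>
      ({p.1, p.2} : Set (SimpleGraph (Fin (n-1))))) S' := by
    rintro p ⟨_, hp⟩ q ⟨_, hq⟩ h
    simp only [Set.pair_eq_pair_iff] at h
    rcases h with ⟨h1, h2⟩ | ⟨h1, h2⟩
    · exact Prod.ext h1 h2
    · exfalso
      rw [h1] at hp
      rw [h2] at hp
      exact irrefl_of r q.1 (trans_of r hq hp)
  rw [hT, Set.ncard_image_of_injOn hinjOn]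
  have e1 : 2 ^ (n-2) * 2 ^ (n-2) = 2 ^ (2 * n - 4) := by
    rw [← pow_add]
    congr 1
    omega
  have e2 : 2 ^ (2 * n - 4) = 2 * 2 ^ (2 * n - 5) := by
    rw [show 2 * n - 4 = (2 * n - 5) + 1 from by omega, pow_succ]
    ring
  have e3 : 2 ^ (n - 2) = 2 * 2 ^ (n - 3) := by
    rw [show n - 2 = (n - 3) + 1 from by omega, pow_succ]
    ring
  have hle : 2 ^ (n - 3) ≤ 2 ^ (2 * n - 5) :=
    Nat.pow_le_pow_right (by norm_num) (by omega)
  rw [e1, e2, e3] at h2S'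
  omega
end

section
/- For every n ≥ 3, the number of simple graphs J on vertex set {1,…,n} such that (i) vertices 1 and n are not adjacent, and (ii) for all 1 ≤ i < j ≤ n−2, vertices i and j are adjacent if and only if vertices i+2 and j+2 are adjacent, is exactly 2^(2n−4). -/
namespace Shift2Aux

variable {n : ℕ}

/-- adjacency on naturals, with bounds bundled existentially -/
def adjN (J : SimpleGraph (Fin n)) (i j : ℕ) : Prop :=
  ∃ (hi : i < n) (hj : j < n), J.Adj ⟨i, hi⟩ ⟨j, hj⟩

lemma adjN_iff (J : SimpleGraph (Fin n)) {i j : ℕ} (hi : i < n) (hj : j < n) :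
    adjN J i j ↔ J.Adj ⟨i, hi⟩ ⟨j, hj⟩ :=
  ⟨fun ⟨_, _, h⟩ => h, fun h => ⟨hi, hj, h⟩⟩

lemma adjN_shift (J : SimpleGraph (Fin n))
    (hc : ∀ i j : ℕ, i < j → j < n - 2 → (adjN J i j ↔ adjN J (i + 2) (j + 2))) :
    ∀ k i j : ℕ, i < j → j + 2 * k < n → (adjN J i j ↔ adjN J (i + 2 * k) (j + 2 * k)) := by
  intro k
  induction k with
  | zero => simp
  | succ k ih =>
    intro i j hij hb
    have h1 := ih i j hij (by omega)
    have h2 := hc (i + 2 * k) (j + 2 * k) (by omega) (by omega)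
    have e1 : i + 2 * (k + 1) = i + 2 * k + 2 := by omega
    have e2 : j + 2 * (k + 1) = j + 2 * k + 2 := by omega
    rw [e1, e2]
    exact h1.trans h2

def base (n : ℕ) (f : Fin 2 → Fin (n - 2) → Prop) (i j : ℕ) : Prop :=
  ∃ h : j - i - 1 < n - 2, f ⟨i % 2, Nat.mod_lt i (by omega)⟩ ⟨j - i - 1, h⟩

def gr (n : ℕ) (f : Fin 2 → Fin (n - 2) → Prop) : SimpleGraph (Fin n) where
  Adj a b := (a.val < b.val ∧ base n f a.val b.val) ∨ (b.val < a.val ∧ base n f b.val a.val)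
  symm := by constructor; intro a b h; tauto
  loopless := by constructor; intro a h; rcases h with ⟨h, _⟩ | ⟨h, _⟩ <;> omega

lemma base_shift (f : Fin 2 → Fin (n - 2) → Prop) (i j : ℕ) :
    base n f (i + 2) (j + 2) ↔ base n f i j := by
  unfold base
  have e : j + 2 - (i + 2) - 1 = j - i - 1 := by omega
  have e2 : (i + 2) % 2 = i % 2 := Nat.add_mod_right i 2
  simp only [e, e2]

end Shift2Aux

namespace Shift2Aux

lemma base_F {n : ℕ} (J : SimpleGraph (Fin n))
    (h1 : ¬ adjN J 0 (n - 1))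
    (hc : ∀ i j : ℕ, i < j → j < n - 2 → (adjN J i j ↔ adjN J (i + 2) (j + 2)))
    (i j : ℕ) (hij : i < j) (hj : j < n) :
    base n (fun p k => adjN J p.val (p.val + k.val + 1)) i j ↔ adjN J i j := by
  have hs := adjN_shift J hc (i / 2) (i % 2) (j - i + i % 2) (by omega) (by omega)
  have e1 : i % 2 + 2 * (i / 2) = i := by omega
  have e2 : j - i + i % 2 + 2 * (i / 2) = j := by omega
  rw [e1, e2] at hs
  by_cases hlt : j - i - 1 < n - 2
  · have e3 : i % 2 + (j - i - 1) + 1 = j - i + i % 2 := by omega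
    constructor
    · rintro ⟨h, hf⟩
      simp only [e3] at hf
      exact hs.mp hf
    · intro h
      refine ⟨hlt, ?_⟩
      simp only [e3]
      exact hs.mpr h
  · have hi0 : i = 0 := by omega
    have hj0 : j = n - 1 := by omega
    subst hi0; subst hj0
    constructor
    · rintro ⟨h, _⟩; omega
    · intro h; exact absurd h h1

end Shift2Aux

/-- for `n ≥ 3`, there are exactly `2^(2n−4)` simple graphs `J` on
`{1,…,n}` (0-indexed via `Fin n`) such that the first and last vertices are not
adjacent and the shift `i ↦ i+2` preserves adjacency, i.e. the induced subgraph on the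
first `n−2` vertices is order-isomorphic to the induced subgraph on the last `n−2`
vertices. -/
theorem shift_by_two_count (n : ℕ) (hn : 3 ≤ n) :
    {J : SimpleGraph (Fin n) |
      ¬ J.Adj ⟨0, by omega⟩ ⟨n - 1, by omega⟩ ∧
      ∀ i j : ℕ, ∀ _hij : i < j, ∀ _hj : j < n - 2,
        (J.Adj ⟨i, by omega⟩ ⟨j, by omega⟩ ↔
         J.Adj ⟨i + 2, by omega⟩ ⟨j + 2, by omega⟩)}.ncard = 2 ^ (2 * n - 4) := by
  classical
  open Shift2Aux in
  set S : Set (SimpleGraph (Fin n)) := {J : SimpleGraph (Fin n) |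
      ¬ J.Adj ⟨0, by omega⟩ ⟨n - 1, by omega⟩ ∧
      ∀ i j : ℕ, ∀ _hij : i < j, ∀ _hj : j < n - 2,
        (J.Adj ⟨i, by omega⟩ ⟨j, by omega⟩ ↔
         J.Adj ⟨i + 2, by omega⟩ ⟨j + 2, by omega⟩)} with hS
  -- the representative function of a graph
  let F : SimpleGraph (Fin n) → (Fin 2 → Fin (n - 2) → Prop) :=
    fun J p k => Shift2Aux.adjN J p.val (p.val + k.val + 1)
  -- membership facts in usable form
  have hmem : ∀ J ∈ S, ¬ Shift2Aux.adjN J 0 (n - 1) ∧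
      (∀ i j : ℕ, i < j → j < n - 2 →
        (Shift2Aux.adjN J i j ↔ Shift2Aux.adjN J (i + 2) (j + 2))) := by
    intro J hJ
    obtain ⟨h1, h2⟩ := hJ
    constructor
    · rw [Shift2Aux.adjN_iff J (by omega) (by omega)]
      exact h1
    · intro i j hij hj
      rw [Shift2Aux.adjN_iff J (by omega : i < n) (by omega : j < n),
          Shift2Aux.adjN_iff J (by omega : i + 2 < n) (by omega : j + 2 < n)]
      exact h2 i j hij hj
  -- gr n f belongs to S
  have hgr_mem : ∀ f : Fin 2 → Fin (n - 2) → Prop, Shift2Aux.gr n f ∈ S := by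
    intro f
    constructor
    · show ¬ (((0:ℕ) < n - 1 ∧ Shift2Aux.base n f 0 (n - 1)) ∨
              ((n - 1 : ℕ) < 0 ∧ Shift2Aux.base n f (n - 1) 0))
      rintro (⟨h, hg, _⟩ | ⟨h, _⟩) <;> omega
    · intro i j hij hj
      show ((i < j ∧ Shift2Aux.base n f i j) ∨ (j < i ∧ Shift2Aux.base n f j i)) ↔
        ((i + 2 < j + 2 ∧ Shift2Aux.base n f (i + 2) (j + 2)) ∨
         (j + 2 < i + 2 ∧ Shift2Aux.base n f (j + 2) (i + 2)))
      constructor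
      · rintro (⟨h, hb⟩ | ⟨h, _⟩)
        · exact Or.inl ⟨by omega, (Shift2Aux.base_shift f i j).mpr hb⟩
        · omega
      · rintro (⟨h, hb⟩ | ⟨h, _⟩)
        · exact Or.inl ⟨by omega, (Shift2Aux.base_shift f i j).mp hb⟩
        · omega
  -- the equivalence
  have hcard : Nat.card ↥S = Nat.card (Fin 2 → Fin (n - 2) → Prop) := by
    refine Nat.card_congr ⟨fun J => F J.val, fun f => ⟨Shift2Aux.gr n f, hgr_mem f⟩, ?_, ?_⟩
    · -- left inverse : gr n (F J) = J
      rintro ⟨J, hJ⟩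
      obtain ⟨h1, hc⟩ := hmem J hJ
      refine Subtype.ext ?_
      have hlt : ∀ a b : Fin n, a.val < b.val →
          ((Shift2Aux.gr n (F J)).Adj a b ↔ J.Adj a b) := by
        intro a b hab
        have : (Shift2Aux.gr n (F J)).Adj a b ↔ Shift2Aux.base n (F J) a.val b.val := by
          constructor
          · rintro (⟨_, hb⟩ | ⟨h, _⟩)
            · exact hb
            · omega
          · intro hb; exact Or.inl ⟨hab, hb⟩
        rw [this, Shift2Aux.base_F J h1 hc a.val b.val hab b.isLt,
            Shift2Aux.adjN_iff J a.isLt b.isLt]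
      ext a b
      rcases lt_trichotomy a.val b.val with h | h | h
      · exact hlt a b h
      · have : a = b := Fin.ext h
        subst this
        constructor
        · rintro (⟨h, _⟩ | ⟨h, _⟩) <;> exact absurd h (lt_irrefl _)
        · intro hh; exact absurd hh (J.irrefl)
      · have hba := hlt b a h
        exact ((Shift2Aux.gr n (F J)).adj_comm a b).trans
          (hba.trans ((J.adj_comm a b).symm))
    · -- right inverse : F (gr n f) = f
      intro f
      funext p k
      apply propext
      have hp : (p : ℕ) < n := by have := p.isLt; omega
      have hq : (p : ℕ) + (k : ℕ) + 1 < n := by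
        have := p.isLt; have := k.isLt; omega
      show Shift2Aux.adjN (Shift2Aux.gr n f) p.val (p.val + k.val + 1) ↔ f p k
      rw [Shift2Aux.adjN_iff _ hp hq]
      have e : (p : ℕ) + (k : ℕ) + 1 - (p : ℕ) - 1 = (k : ℕ) := by omega
      have ep : (p : ℕ) % 2 = (p : ℕ) := Nat.mod_eq_of_lt p.isLt
      have hk := k.isLt
      have hp2 := p.isLt
      show (((p : ℕ) < (p : ℕ) + (k : ℕ) + 1 ∧
              Shift2Aux.base n f p.val ((p : ℕ) + (k : ℕ) + 1)) ∨
            ((p : ℕ) + (k : ℕ) + 1 < (p : ℕ) ∧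
              Shift2Aux.base n f ((p : ℕ) + (k : ℕ) + 1) p.val)) ↔ f p k
      constructor
      · rintro (⟨h, hg, hf⟩ | ⟨h, _⟩)
        · convert hf using 2 <;> omega
        · omega
      · intro h
        refine Or.inl ⟨by omega, ?_, ?_⟩
        · omega
        · convert h using 2
  rw [← Nat.card_coe_set_eq, hcard]
  rw [Nat.card_eq_fintype_card]
  rw [Fintype.card_fun, Fintype.card_fun, Fintype.card_prop, Fintype.card_fin,
      Fintype.card_fin, ← pow_mul]
  congr 1
  omega
end

section
/- For every n ≥ 3, the map that sends each graph universal cycle G for the permutation graphs on {1,…,n} (a cyclically ordered graph on vertex set Z_(n!), with no edges between vertices at cyclic distance n or more, such that every permutation graph on {1,…,n} is order-isomorphic to exactly one n-window of G) to the sequence (π_i)_{i ∈ Z_(n!)}, where π_i is the unique permutation of {1,…,n} whose permutation graph is order-isomorphic to the n-window of G starting at i, is a bijection onto the set of cyclic sequences (π_i)_{i ∈ Z_(n!)} that list every permutation of {1,…,n} exactly once and in which every consecutive pair (π_i, π_{i+1}) overlaps by n−1. (Such cyclic sequences are exactly the Euler tours of the clustered graph of overlapping n-permutations.) -/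
namespace Stmt13

/-- The permutation graph of `π`: vertices `i < j` are adjacent iff `π i > π j`. -/
def permGraph {n : ℕ} (π : Equiv.Perm (Fin n)) : SimpleGraph (Fin n) where
  Adj i j := (i < j ∧ π j < π i) ∨ (j < i ∧ π i < π j)
  symm := ⟨by intro i j h; tauto⟩
  loopless := ⟨by intro i h; rcases h with ⟨h, _⟩ | ⟨h, _⟩ <;> exact absurd h (lt_irrefl i)⟩

/-- The pair of permutations `(σ, τ)` overlaps by `s`. -/
def POverlap (n s : ℕ) (σ τ : Equiv.Perm (Fin n)) : Prop :=
  ∀ i j : ℕ, ∀ _hi : n - s ≤ i, ∀ _hij : i < j, ∀ hj : j < n,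
    (σ ⟨i, by omega⟩ < σ ⟨j, hj⟩ ↔
     τ ⟨i - (n - s), by omega⟩ < τ ⟨j - (n - s), by omega⟩)

/-- The `n`-window of the cyclically ordered graph `G` on `Z_N` starting at position
`i : ℕ` (read cyclically). -/
def cwindow {N : ℕ} (G : SimpleGraph (Fin N)) (i : ℕ) (n : ℕ) : SimpleGraph (Fin n) where
  Adj a b := ∃ (ha : (i + a.val) % N < N) (hb : (i + b.val) % N < N),
    G.Adj ⟨(i + a.val) % N, ha⟩ ⟨(i + b.val) % N, hb⟩
  symm := ⟨by rintro a b ⟨ha, hb, h⟩; exact ⟨hb, ha, h.symm⟩⟩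
  loopless := ⟨by rintro a ⟨ha, hb, h⟩; exact G.ne_of_adj h rfl⟩

/-- Cyclic distance between positions `a` and `b` in `Z_ℓ`. -/
def cyclicDist (ℓ a b : ℕ) : ℕ := min ((a + ℓ - b) % ℓ) ((b + ℓ - a) % ℓ)

/-- A graph universal cycle for the permutation graphs on `{1,…,n}`: a cyclically
ordered graph on `Z_(n!)` with no edges at cyclic distance `≥ n` in which every
permutation graph is order-isomorphic to (i.e. equals) exactly one `n`-window. -/
def IsPermGucycle (n : ℕ) (G : SimpleGraph (Fin (Nat.factorial n))) : Prop :=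
  (∀ a b : Fin (Nat.factorial n), G.Adj a b → cyclicDist (Nat.factorial n) a.val b.val < n) ∧
  ∀ π : Equiv.Perm (Fin n), ∃! i : Fin (Nat.factorial n), cwindow G i.val n = permGraph π

/-- An Euler tour of the clustered graph of overlapping `n`-permutations: a cyclic
sequence listing every permutation exactly once in which every consecutive pair
overlaps by `n−1`. -/
def IsPermTour (n : ℕ) (p : Fin (Nat.factorial n) → Equiv.Perm (Fin n)) : Prop :=
  Function.Bijective p ∧
  ∀ i : Fin (Nat.factorial n),
    POverlap n (n - 1) (p i) (p ⟨(i.val + 1) % Nat.factorial n, Nat.mod_lt _ i.pos⟩)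

lemma permGraph_adj {n : ℕ} (σ : Equiv.Perm (Fin n)) (a b : Fin n) :
    (permGraph σ).Adj a b ↔ ((a < b ∧ σ b < σ a) ∨ (b < a ∧ σ a < σ b)) := Iff.rfl

lemma perm_val_ne {n : ℕ} (σ : Equiv.Perm (Fin n)) {a b : Fin n} (h : a ≠ b) :
    (σ a).val ≠ (σ b).val := fun e => h (σ.injective (Fin.ext e))

lemma lt_iff_not_adj {n : ℕ} (σ : Equiv.Perm (Fin n)) {a b : Fin n} (hab : a < b) :
    σ a < σ b ↔ ¬ (permGraph σ).Adj a b := by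
  have h1 := perm_val_ne σ hab.ne
  rw [permGraph_adj]
  simp only [Fin.lt_def] at *
  omega

lemma permGraph_injective {n : ℕ} : Function.Injective (permGraph : Equiv.Perm (Fin n) → _) := by
  intro σ τ h
  have key : ∀ x y : Fin n, x < y → (σ x < σ y ↔ τ x < τ y) := by
    intro x y hxy
    have hadj : (permGraph σ).Adj x y ↔ (permGraph τ).Adj x y := by rw [h]
    rw [lt_iff_not_adj σ hxy, lt_iff_not_adj τ hxy]
    exact not_iff_not.mpr hadj
  set f : Fin n → Fin n := fun x => σ (τ.symm x) with hf
  have hsm : StrictMono f := by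
    intro x y hxy
    have htxy : τ (τ.symm x) < τ (τ.symm y) := by simpa using hxy
    rcases lt_trichotomy (τ.symm x) (τ.symm y) with hc | hc | hc
    · exact (key _ _ hc).mpr htxy
    · exact absurd (congrArg τ hc) (by simpa using hxy.ne)
    · have h1 : ¬ (σ (τ.symm y) < σ (τ.symm x)) := by
        rw [key _ _ hc]; simpa using lt_asymm hxy
      have h2 : σ (τ.symm x) ≠ σ (τ.symm y) :=
        fun e => hxy.ne (by simpa using congrArg τ (σ.injective e))
      exact lt_of_le_of_ne (not_lt.mp h1) h2
  have hsurj : Function.Surjective f := fun y => ⟨τ (σ.symm y), by simp [hf]⟩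
  have hid : ∀ x, f x = x := by
    have e := Subsingleton.elim (hsm.orderIsoOfSurjective f hsurj) (OrderIso.refl (Fin n))
    intro x
    have := congrArg (fun (g : Fin n ≃o Fin n) => g x) e
    exact this
  apply Equiv.ext
  intro y
  have := hid (τ y)
  simpa [hf] using this

lemma cwindow_adj {N : ℕ} (hN : 0 < N) (G : SimpleGraph (Fin N)) (i n : ℕ) (a b : Fin n) :
    (cwindow G i n).Adj a b ↔
      G.Adj ⟨(i + a.val) % N, Nat.mod_lt _ hN⟩ ⟨(i + b.val) % N, Nat.mod_lt _ hN⟩ := by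
  constructor
  · rintro ⟨_, _, h⟩; exact h
  · intro h; exact ⟨_, _, h⟩

lemma two_mul_le_factorial {n : ℕ} (hn : 3 ≤ n) : 2 * n ≤ n.factorial := by
  induction n with
  | zero => omega
  | succ m ih =>
    rcases Nat.lt_or_ge m 3 with hm | hm
    · interval_cases m <;> simp [Nat.factorial] <;> omega
    · have h1 := ih hm
      have h2 : m.factorial ≥ 1 := Nat.one_le_iff_ne_zero.mpr (Nat.factorial_ne_zero m)
      have : (m+1).factorial = (m+1) * m.factorial := rfl
      nlinarith

lemma overlap_lt {n : ℕ} (hn : 3 ≤ n) {σ τ : Equiv.Perm (Fin n)}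
    (h : POverlap n (n-1) σ τ) (x y : Fin n) (hx : x.val + 1 < n) (hy : y.val + 1 < n)
    (hxy : x < y) :
    (σ ⟨x.val + 1, hx⟩ < σ ⟨y.val + 1, hy⟩ ↔ τ x < τ y) := by
  have h1 := h (x.val + 1) (y.val + 1) (by omega) (by omega) hy
  have hns : n - (n - 1) = 1 := by omega
  simp only [hns, Nat.add_sub_cancel, Fin.eta] at h1
  exact h1

lemma step_adj {n : ℕ} (hn : 3 ≤ n) {σ τ : Equiv.Perm (Fin n)}
    (h : POverlap n (n-1) σ τ) (a b : Fin n) (ha : a.val + 1 < n) (hb : b.val + 1 < n) :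
    (permGraph σ).Adj ⟨a.val + 1, ha⟩ ⟨b.val + 1, hb⟩ ↔ (permGraph τ).Adj a b := by
  rcases lt_trichotomy a b with hc | hc | hc
  · have hc' : (⟨a.val + 1, ha⟩ : Fin n) < ⟨b.val + 1, hb⟩ := by
      simp only [Fin.lt_def] at *; omega
    rw [← not_iff_not, ← lt_iff_not_adj σ hc', ← lt_iff_not_adj τ hc]
    exact overlap_lt hn h a b ha hb hc
  · have e1 : (⟨a.val + 1, ha⟩ : Fin n) = ⟨b.val + 1, hb⟩ :=
      Fin.ext (by simpa using congrArg Fin.val hc)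
    rw [e1]
    simp [hc]
  · have hc' : (⟨b.val + 1, hb⟩ : Fin n) < ⟨a.val + 1, ha⟩ := by
      simp only [Fin.lt_def] at *; omega
    rw [SimpleGraph.adj_comm, SimpleGraph.adj_comm _ a b, ← not_iff_not,
      ← lt_iff_not_adj σ hc', ← lt_iff_not_adj τ hc]
    exact overlap_lt hn h b a hb ha hc

lemma chain_adj {n : ℕ} (hn : 3 ≤ n) {p : Fin (Nat.factorial n) → Equiv.Perm (Fin n)}
    (hp : IsPermTour n p) (d : ℕ) :
    ∀ (i : Fin (Nat.factorial n)) (a b : Fin n) (had : a.val + d < n) (hbd : b.val + d < n),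
    ((permGraph (p i)).Adj ⟨a.val + d, had⟩ ⟨b.val + d, hbd⟩ ↔
      (permGraph (p ⟨(i.val + d) % Nat.factorial n, Nat.mod_lt _ i.pos⟩)).Adj a b) := by
  induction d with
  | zero =>
    intro i a b had hbd
    have hi : (i.val + 0) % Nat.factorial n = i.val := Nat.mod_eq_of_lt i.isLt
    simp only [Nat.add_zero, Nat.mod_eq_of_lt i.isLt, Fin.eta]
  | succ d ih =>
    intro i a b had hbd
    set i' : Fin (Nat.factorial n) := ⟨(i.val + 1) % Nat.factorial n, Nat.mod_lt _ i.pos⟩ with hi'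
    have h1 := step_adj hn (hp.2 i) ⟨a.val + d, by omega⟩ ⟨b.val + d, by omega⟩ had hbd
    have h2 := ih i' a b (by omega) (by omega)
    have he : (i'.val + d) % Nat.factorial n = (i.val + (d + 1)) % Nat.factorial n := by
      rw [hi']
      simp only [Nat.mod_add_mod]
      congr 1
      omega
    simp only [he] at h2
    exact h1.trans h2

lemma transfer_aux {n : ℕ} (hn : 3 ≤ n) {p : Fin (Nat.factorial n) → Equiv.Perm (Fin n)}
    (hp : IsPermTour n p) (i j : Fin (Nat.factorial n)) (a b a' b' : Fin n)
    (h1 : (i.val + a.val) % Nat.factorial n = (j.val + a'.val) % Nat.factorial n)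
    (h2 : (i.val + b.val) % Nat.factorial n = (j.val + b'.val) % Nat.factorial n)
    (hle : a'.val ≤ a.val) :
    ((permGraph (p i)).Adj a b ↔ (permGraph (p j)).Adj a' b') := by
  have h2n : 2 * n ≤ Nat.factorial n := two_mul_le_factorial hn
  have m1 : i.val + a.val ≡ j.val + a'.val [MOD Nat.factorial n] := h1
  have m2 : i.val + b.val ≡ j.val + b'.val [MOD Nat.factorial n] := h2
  have m3 := m1.add m2.symm
  have e1 : (i.val + a.val) + (j.val + b'.val) = (i.val + j.val) + (a.val + b'.val) := by ring
  have e2 : (j.val + a'.val) + (i.val + b.val) = (i.val + j.val) + (a'.val + b.val) := by ring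
  rw [e1, e2] at m3
  have m5 : a.val + b'.val ≡ a'.val + b.val [MOD Nat.factorial n] := Nat.ModEq.add_left_cancel' _ m3
  have cross : a.val + b'.val = a'.val + b.val := by
    have hb' := b'.isLt; have ha := a.isLt; have ha' := a'.isLt; have hb := b.isLt
    unfold Nat.ModEq at m5
    rwa [Nat.mod_eq_of_lt (by omega), Nat.mod_eq_of_lt (by omega)] at m5
  set d := a.val - a'.val with hd
  have hav : a.val = a'.val + d := by omega
  have hbv : b.val = b'.val + d := by omega
  have m1' : (i.val + d) + a'.val ≡ j.val + a'.val [MOD Nat.factorial n] := by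
    have e3 : i.val + a.val = (i.val + d) + a'.val := by omega
    rwa [e3] at m1
  have m6 : i.val + d ≡ j.val [MOD Nat.factorial n] := Nat.ModEq.add_right_cancel' _ m1'
  have je : (i.val + d) % Nat.factorial n = j.val := by
    have := m6
    unfold Nat.ModEq at this
    rwa [Nat.mod_eq_of_lt j.isLt] at this
  have hch := chain_adj hn hp d i a' b' (by omega) (by omega)
  have ea : (⟨a'.val + d, by omega⟩ : Fin n) = a := Fin.ext (show a'.val + d = a.val by omega)
  have eb : (⟨b'.val + d, by omega⟩ : Fin n) = b := Fin.ext (show b'.val + d = b.val by omega)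
  have ej : (⟨(i.val + d) % Nat.factorial n, Nat.mod_lt _ i.pos⟩ : Fin (Nat.factorial n)) = j := Fin.ext je
  rw [ea, eb, ej] at hch
  exact hch

lemma transfer {n : ℕ} (hn : 3 ≤ n) {p : Fin (Nat.factorial n) → Equiv.Perm (Fin n)}
    (hp : IsPermTour n p) (i j : Fin (Nat.factorial n)) (a b a' b' : Fin n)
    (h1 : (i.val + a.val) % Nat.factorial n = (j.val + a'.val) % Nat.factorial n)
    (h2 : (i.val + b.val) % Nat.factorial n = (j.val + b'.val) % Nat.factorial n) :
    ((permGraph (p i)).Adj a b ↔ (permGraph (p j)).Adj a' b') := by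
  rcases le_total a'.val a.val with hle | hle
  · exact transfer_aux hn hp i j a b a' b' h1 h2 hle
  · exact (transfer_aux hn hp j i a' b' a b h1.symm h2.symm hle).symm

lemma cyc_helper {N x y k : ℕ} (hN : 0 < N) (hk : k < N) (hxy : y = x + k) :
    (y % N + N - x % N) % N = k := by
  subst hxy
  have hr : x % N < N := Nat.mod_lt _ hN
  have hkey : (x + k) % N = (x % N + k) % N := by rw [Nat.mod_add_mod]
  rcases Nat.lt_or_ge (x % N + k) N with hc | hc
  · rw [hkey, Nat.mod_eq_of_lt hc]
    have e : x % N + k + N - x % N = k + N := by omega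
    rw [e, Nat.add_mod_right, Nat.mod_eq_of_lt hk]
  · have e2 : (x % N + k) % N = x % N + k - N := by
      rw [Nat.mod_eq_sub_mod hc, Nat.mod_eq_of_lt (by omega)]
    rw [hkey, e2]
    have e3 : x % N + k - N + N - x % N = k := by omega
    rw [e3, Nat.mod_eq_of_lt hk]

/-- The graph built from a tour. -/
def tourGraph (n : ℕ) (p : Fin (Nat.factorial n) → Equiv.Perm (Fin n)) :
    SimpleGraph (Fin (Nat.factorial n)) where
  Adj u v := ∃ (i : Fin (Nat.factorial n)) (a b : Fin n), (permGraph (p i)).Adj a b ∧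
      (i.val + a.val) % Nat.factorial n = u.val ∧ (i.val + b.val) % Nat.factorial n = v.val
  symm := ⟨by rintro u v ⟨i, a, b, h, ha, hb⟩; exact ⟨i, b, a, h.symm, hb, ha⟩⟩
  loopless := ⟨by
    rintro u ⟨i, a, b, h, ha, hb⟩
    have hnN : n ≤ Nat.factorial n := Nat.self_le_factorial n
    have hab : a = b := by
      have m1 : i.val + a.val ≡ i.val + b.val [MOD Nat.factorial n] := ha.trans hb.symm
      have m2 : a.val ≡ b.val [MOD Nat.factorial n] := Nat.ModEq.add_left_cancel' _ m1
      unfold Nat.ModEq at m2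
      rw [Nat.mod_eq_of_lt (by omega), Nat.mod_eq_of_lt (by omega)] at m2
      exact Fin.ext m2
    subst hab
    exact (permGraph (p i)).ne_of_adj h rfl⟩

lemma tourGraph_window {n : ℕ} (hn : 3 ≤ n) {p : Fin (Nat.factorial n) → Equiv.Perm (Fin n)}
    (hp : IsPermTour n p) (i : Fin (Nat.factorial n)) :
    cwindow (tourGraph n p) i.val n = permGraph (p i) := by
  have hN : 0 < Nat.factorial n := Nat.factorial_pos n
  ext a b
  rw [cwindow_adj hN]
  constructor
  · rintro ⟨j, a', b', hadj, ha', hb'⟩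
    exact (transfer hn hp j i a' b' a b ha' hb').mp hadj
  · intro h
    exact ⟨i, a, b, h, rfl, rfl⟩

lemma tourGraph_gucycle {n : ℕ} (hn : 3 ≤ n) {p : Fin (Nat.factorial n) → Equiv.Perm (Fin n)}
    (hp : IsPermTour n p) : IsPermGucycle n (tourGraph n p) := by
  have hN : 0 < Nat.factorial n := Nat.factorial_pos n
  have hnN : n ≤ Nat.factorial n := Nat.self_le_factorial n
  constructor
  · rintro u v ⟨i, a, b, hadj, ha, hb⟩
    have hab : a ≠ b := hadj.ne
    rcases Nat.lt_or_ge a.val b.val with hc | hc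
    · have hk := cyc_helper (x := i.val + a.val) (y := i.val + b.val)
        (k := b.val - a.val) hN (by omega) (by omega)
      rw [ha, hb] at hk
      calc cyclicDist (Nat.factorial n) u.val v.val
          ≤ (v.val + Nat.factorial n - u.val) % Nat.factorial n := min_le_right _ _
        _ < n := by rw [hk]; omega
    · have hc' : b.val < a.val := by
        rcases Nat.lt_or_ge b.val a.val with h | h
        · exact h
        · exact absurd (Fin.ext (by omega : a.val = b.val)) hab
      have hk := cyc_helper (x := i.val + b.val) (y := i.val + a.val)
        (k := a.val - b.val) hN (by omega) (by omega)
      rw [ha, hb] at hk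
      calc cyclicDist (Nat.factorial n) u.val v.val
          ≤ (u.val + Nat.factorial n - v.val) % Nat.factorial n := min_le_left _ _
        _ < n := by rw [hk]; omega
  · intro π
    refine ⟨(Equiv.ofBijective p hp.1).symm π, ?_, ?_⟩
    · show cwindow (tourGraph n p) ((Equiv.ofBijective p hp.1).symm π).val n = permGraph π
      rw [tourGraph_window hn hp]
      congr 1
      exact (Equiv.ofBijective p hp.1).apply_symm_apply π
    · intro j hj
      have hj' : cwindow (tourGraph n p) j.val n = permGraph π := hj
      rw [tourGraph_window hn hp] at hj'
      have hpj : p j = π := permGraph_injective hj'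
      rw [← hpj]
      exact ((Equiv.ofBijective p hp.1).symm_apply_apply j).symm

lemma adj_of_window_aux {n : ℕ} (hn : 3 ≤ n) {G G' : SimpleGraph (Fin (Nat.factorial n))}
    (h : ∀ i : Fin (Nat.factorial n), cwindow G i.val n = cwindow G' i.val n)
    {u v : Fin (Nat.factorial n)}
    (hd : (v.val + Nat.factorial n - u.val) % Nat.factorial n < n)
    (huv : G.Adj u v) : G'.Adj u v := by
  have hN : 0 < Nat.factorial n := Nat.factorial_pos n
  have hu : u.val < Nat.factorial n := u.isLt
  have hv : v.val < Nat.factorial n := v.isLt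
  have dd : (u.val + (v.val + Nat.factorial n - u.val) % Nat.factorial n) % Nat.factorial n
      = v.val := by
    rw [Nat.add_mod_mod]
    have e : u.val + (v.val + Nat.factorial n - u.val) = v.val + Nat.factorial n := by omega
    rw [e, Nat.add_mod_right, Nat.mod_eq_of_lt hv]
  have hdne : (v.val + Nat.factorial n - u.val) % Nat.factorial n ≠ 0 := by
    intro h0
    rw [h0, Nat.add_zero, Nat.mod_eq_of_lt hu] at dd
    exact huv.ne (Fin.ext dd)
  have key : ∀ (H : SimpleGraph (Fin (Nat.factorial n))),
      (cwindow H u.val n).Adj ⟨0, by omega⟩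
        ⟨(v.val + Nat.factorial n - u.val) % Nat.factorial n, hd⟩ ↔ H.Adj u v := by
    intro H
    rw [cwindow_adj hN]
    have e0 : (⟨(u.val + (⟨0, by omega⟩ : Fin n).val) % Nat.factorial n,
        Nat.mod_lt _ hN⟩ : Fin (Nat.factorial n)) = u :=
      Fin.ext (by simp [Nat.mod_eq_of_lt hu])
    have ed : (⟨(u.val + (⟨(v.val + Nat.factorial n - u.val) % Nat.factorial n, hd⟩
        : Fin n).val) % Nat.factorial n, Nat.mod_lt _ hN⟩ : Fin (Nat.factorial n)) = v :=
      Fin.ext dd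
    rw [e0, ed]
  rw [← key G']
  rw [← h u] at *
  exact (key G).mpr huv

lemma window_ext {n : ℕ} (hn : 3 ≤ n) {G G' : SimpleGraph (Fin (Nat.factorial n))}
    (hG : IsPermGucycle n G) (hG' : IsPermGucycle n G')
    (h : ∀ i : Fin (Nat.factorial n), cwindow G i.val n = cwindow G' i.val n) : G = G' := by
  have main : ∀ (H H' : SimpleGraph (Fin (Nat.factorial n))), IsPermGucycle n H →
      (∀ i : Fin (Nat.factorial n), cwindow H i.val n = cwindow H' i.val n) →
      ∀ u v, H.Adj u v → H'.Adj u v := by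
    intro H H' hH hw u v huv
    have hd := hH.1 u v huv
    rw [cyclicDist, min_lt_iff] at hd
    rcases hd with hd | hd
    · exact (adj_of_window_aux hn hw (u := v) (v := u) hd huv.symm).symm
    · exact adj_of_window_aux hn hw hd huv
  ext u v
  exact ⟨main G G' hG h u v, main G' G hG' (fun i => (h i).symm) u v⟩

lemma gucycle_p {n : ℕ} (hn : 3 ≤ n) {G : SimpleGraph (Fin (Nat.factorial n))}
    (hG : IsPermGucycle n G) :
    ∃ p : Fin (Nat.factorial n) → Equiv.Perm (Fin n), IsPermTour n p ∧
      ∀ i : Fin (Nat.factorial n), permGraph (p i) = cwindow G i.val n := by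
  classical
  have hN : 0 < Nat.factorial n := Nat.factorial_pos n
  choose f hf huniq using hG.2
  have finj : Function.Injective f := by
    intro σ τ hst
    apply permGraph_injective
    rw [← hf σ, ← hf τ, hst]
  have fbij : Function.Bijective f := by
    rw [Fintype.bijective_iff_injective_and_card]
    exact ⟨finj, by simp [Fintype.card_perm]⟩
  set e := Equiv.ofBijective f fbij with he
  have hw : ∀ i : Fin (Nat.factorial n), permGraph (e.symm i) = cwindow G i.val n := by
    intro i
    rw [← hf (e.symm i)]
    have : f (e.symm i) = i := e.apply_symm_apply i
    rw [this]
  refine ⟨fun i => e.symm i, ⟨e.symm.bijective, ?_⟩, hw⟩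
  intro i x y hx hxy hy
  have hns : n - (n - 1) = 1 := by omega
  simp only [hns] at hx ⊢
  have hordxy : (⟨x, by omega⟩ : Fin n) < ⟨y, hy⟩ := by
    simp only [Fin.lt_def]; omega
  have hordxy' : (⟨x - 1, by omega⟩ : Fin n) < ⟨y - 1, by omega⟩ := by
    simp only [Fin.lt_def]; omega
  rw [lt_iff_not_adj _ hordxy, lt_iff_not_adj _ hordxy']
  apply not_iff_not.mpr
  rw [hw i, hw ⟨(i.val + 1) % Nat.factorial n, Nat.mod_lt _ i.pos⟩]
  rw [cwindow_adj hN, cwindow_adj hN]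
  have ex : ((i.val + 1) % Nat.factorial n + (x - 1)) % Nat.factorial n
      = (i.val + x) % Nat.factorial n := by
    rw [Nat.mod_add_mod]; congr 1; omega
  have ey : ((i.val + 1) % Nat.factorial n + (y - 1)) % Nat.factorial n
      = (i.val + y) % Nat.factorial n := by
    rw [Nat.mod_add_mod]; congr 1; omega
  simp only [Fin.val_mk]
  simp only [ex, ey]

/-- for `n ≥ 3`, the map reading off the permutations from the
`n`-windows is a bijection from the set of graph universal cycles for permutation
graphs on `{1,…,n}` onto the set of Euler tours of the clustered graph of overlapping
`n`-permutations, preserving the order in which `S_n` is covered. -/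
theorem perm_gucycle_tour_bijection (n : ℕ) (hn : 3 ≤ n) :
    ∃ F : {G : SimpleGraph (Fin (Nat.factorial n)) // IsPermGucycle n G} →
          {p : Fin (Nat.factorial n) → Equiv.Perm (Fin n) // IsPermTour n p},
      Function.Bijective F ∧
      ∀ (G : {G : SimpleGraph (Fin (Nat.factorial n)) // IsPermGucycle n G})
        (i : Fin (Nat.factorial n)),
        permGraph ((F G).val i) = cwindow G.val i.val n := by
  classical
  have exP : ∀ G : {G : SimpleGraph (Fin (Nat.factorial n)) // IsPermGucycle n G},
      ∃ p : {p : Fin (Nat.factorial n) → Equiv.Perm (Fin n) // IsPermTour n p},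
      ∀ i : Fin (Nat.factorial n), permGraph (p.val i) = cwindow G.val i.val n := by
    intro G
    obtain ⟨p, hp, hwin⟩ := gucycle_p hn G.2
    exact ⟨⟨p, hp⟩, hwin⟩
  choose F hF using exP
  refine ⟨F, ⟨?_, ?_⟩, hF⟩
  · intro G G' hFG
    apply Subtype.ext
    apply window_ext hn G.2 G'.2
    intro i
    rw [← hF G i, ← hF G' i, hFG]
  · rintro ⟨p, hp⟩
    refine ⟨⟨tourGraph n p, tourGraph_gucycle hn hp⟩, ?_⟩
    apply Subtype.ext
    funext i
    apply permGraph_injective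
    rw [hF ⟨tourGraph n p, tourGraph_gucycle hn hp⟩ i]
    exact tourGraph_window hn hp i

end Stmt13
end
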